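/- arXiv:1404.5814 — 6 statements merged into one kernel-verified Lean document; each statement's English description precedes it below -/
import Mathlib

section
/- Define ⟨t₁⟩(λ) = (2/D₁)·(1 + λ(1-(1-a)²)/(4D₂))·∑_{n≥1} 1/(n² + (λ/D₁)(1-(1-a)ⁿ)), with constants D₁, D₂ > 0 and 0 < a < 1. Then ⟨t₁⟩(λ) → ∞ as λ → ∞; more precisely ⟨t₁⟩(λ)/√λ remains bounded above and bounded below by positive constants for large λ. -/
open Real Filter

lemma telescope_hasSum (s : ℝ) (hs : 0 < s) :
    HasSum (fun n : ℕ => 1/((n:ℝ)+s) - 1/((n:ℝ)+1+s)) (1/s) := by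
  have hnn : ∀ n : ℕ, 0 ≤ 1/((n:ℝ)+s) - 1/((n:ℝ)+1+s) := by
    intro n
    have h1 : 0 < (n:ℝ)+s := by positivity
    have : 1/((n:ℝ)+1+s) ≤ 1/((n:ℝ)+s) := by
      apply one_div_le_one_div_of_le h1; linarith
    linarith
  rw [hasSum_iff_tendsto_nat_of_nonneg hnn]
  have heq : ∀ n : ℕ, ∑ i ∈ Finset.range n, (1/((i:ℝ)+s) - 1/((i:ℝ)+1+s))
      = 1/s - 1/((n:ℝ)+s) := by
    intro n
    have h1 := Finset.sum_range_sub' (fun i : ℕ => 1/((i:ℝ)+s)) n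
    have h2 : ∑ i ∈ Finset.range n, (1/((i:ℝ)+s) - 1/((i:ℝ)+1+s))
        = ∑ i ∈ Finset.range n, (1/((i:ℝ)+s) - 1/(((i+1:ℕ):ℝ)+s)) := by
      apply Finset.sum_congr rfl; intro i _; push_cast; ring
    rw [h2, h1]; norm_num
  simp only [heq]
  have h0 : Tendsto (fun n : ℕ => (n:ℝ)+s) atTop atTop :=
    tendsto_atTop_add_const_right _ s tendsto_natCast_atTop_atTop
  have h1 : Tendsto (fun n : ℕ => 1/((n:ℝ)+s)) atTop (nhds 0) := by
    simp only [one_div]; exact h0.inv_tendsto_atTop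
  simpa using ((tendsto_const_nhds (x := 1/s) (f := atTop (α := ℕ))).sub h1)

lemma sq_tail_summable_and_bound (s : ℝ) (hs : 0 < s) :
    Summable (fun n : ℕ => 1/((n:ℝ)+1+s)^2) ∧ (∑' n : ℕ, 1/((n:ℝ)+1+s)^2) ≤ 1/s := by
  have ht := telescope_hasSum s hs
  have hle : ∀ n : ℕ, 1/((n:ℝ)+1+s)^2 ≤ 1/((n:ℝ)+s) - 1/((n:ℝ)+1+s) := by
    intro n
    have h1 : 0 < (n:ℝ)+s := by positivity
    have h2 : 0 < (n:ℝ)+1+s := by positivity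
    rw [div_sub_div _ _ (ne_of_gt h1) (ne_of_gt h2)]
    have hnum : 1 * ((n:ℝ)+1+s) - ((n:ℝ)+s) * 1 = 1 := by ring
    rw [hnum]
    apply one_div_le_one_div_of_le (by positivity)
    nlinarith
  have hsum : Summable (fun n : ℕ => 1/((n:ℝ)+1+s)^2) :=
    Summable.of_nonneg_of_le (fun n => by positivity) hle ht.summable
  exact ⟨hsum, le_trans (Summable.tsum_le_tsum hle hsum ht.summable) (le_of_eq ht.tsum_eq)⟩

lemma tsum_G_bounds (D1 a lam : ℝ) (hD1 : 0 < D1) (ha : 0 < a) (ha1 : a < 1)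
    (hlam : 4 * D1 ≤ lam) :
    1/(4 * Real.sqrt (lam/D1)) ≤ (∑' n : ℕ, 1/(((n:ℝ)+1)^2 + lam/D1*(1-(1-a)^(n+1)))) ∧
    (∑' n : ℕ, 1/(((n:ℝ)+1)^2 + lam/D1*(1-(1-a)^(n+1)))) ≤ 2/Real.sqrt (lam/D1 * a) := by
  set M := lam/D1 with hMdef
  have hM : 4 ≤ M := by
    rw [hMdef, le_div_iff₀ hD1]; linarith
  have hM0 : 0 < M := by linarith
  set s := Real.sqrt (M * a) with hsdef
  have hs : 0 < s := Real.sqrt_pos.2 (by positivity)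
  have hs2 : s^2 = M * a := Real.sq_sqrt (by positivity)
  -- facts about the geometric part
  have hgeo : ∀ n : ℕ, a ≤ 1 - (1-a)^(n+1) ∧ 1 - (1-a)^(n+1) ≤ 1 := by
    intro n
    have h0 : (0:ℝ) ≤ 1 - a := by linarith
    have h1 : (1:ℝ) - a ≤ 1 := by linarith
    have hp : (1-a)^(n+1) ≤ (1-a)^1 := pow_le_pow_of_le_one h0 h1 (by omega)
    have hp0 : (0:ℝ) ≤ (1-a)^(n+1) := by positivity
    constructor
    · simp at hp; linarith
    · linarith
  have hden_pos : ∀ n : ℕ, 0 < ((n:ℝ)+1)^2 + M*(1-(1-a)^(n+1)) := by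
    intro n
    have := (hgeo n).1
    have : 0 ≤ M*(1-(1-a)^(n+1)) := mul_nonneg hM0.le (by linarith)
    positivity
  have hnn : ∀ n : ℕ, 0 ≤ 1/(((n:ℝ)+1)^2 + M*(1-(1-a)^(n+1))) := fun n => by
    have := hden_pos n; positivity
  obtain ⟨hsq_sum, hsq_bd⟩ := sq_tail_summable_and_bound s hs
  -- upper termwise bound
  have hub : ∀ n : ℕ, 1/(((n:ℝ)+1)^2 + M*(1-(1-a)^(n+1))) ≤ 2 * (1/((n:ℝ)+1+s)^2) := by
    intro n
    have h1 := (hgeo n).1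
    have hden := hden_pos n
    rw [mul_one_div, div_le_div_iff₀ hden (by positivity)]
    have hMa : M * a ≤ M*(1-(1-a)^(n+1)) := by
      apply mul_le_mul_of_nonneg_left h1 hM0.le
    nlinarith [sq_nonneg ((n:ℝ)+1-s), hs2]
  have hGsum : Summable (fun n : ℕ => 1/(((n:ℝ)+1)^2 + M*(1-(1-a)^(n+1)))) :=
    Summable.of_nonneg_of_le hnn hub (hsq_sum.mul_left 2)
  constructor
  · -- lower bound
    set N := ⌊Real.sqrt M⌋₊ with hNdef
    have hsqM : 0 < Real.sqrt M := Real.sqrt_pos.2 hM0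
    have hsqM2 : (Real.sqrt M)^2 = M := Real.sq_sqrt hM0.le
    have h2M : 2 ≤ Real.sqrt M := by
      have : Real.sqrt 4 ≤ Real.sqrt M := Real.sqrt_le_sqrt hM
      rwa [show (4:ℝ) = 2^2 by norm_num, Real.sqrt_sq (by norm_num : (0:ℝ) ≤ 2)] at this
    have hNfloor : (N:ℝ) ≤ Real.sqrt M := Nat.floor_le hsqM.le
    have hNlb : Real.sqrt M - 1 ≤ (N:ℝ) := by
      have := Nat.lt_floor_add_one (Real.sqrt M)
      linarith
    have hterm : ∀ n ∈ Finset.range N, 1/(2*M) ≤ 1/(((n:ℝ)+1)^2 + M*(1-(1-a)^(n+1))) := by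
      intro n hn
      have hnN : (n:ℝ)+1 ≤ N := by
        have := Finset.mem_range.1 hn
        have : (n:ℝ) + 1 ≤ N := by exact_mod_cast this
        exact this
      have hsq : ((n:ℝ)+1)^2 ≤ M := by
        have h1 : (0:ℝ) ≤ (n:ℝ)+1 := by positivity
        nlinarith [hNfloor]
      have hgle : M*(1-(1-a)^(n+1)) ≤ M := by
        have := (hgeo n).2
        nlinarith
      apply one_div_le_one_div_of_le (hden_pos n)
      linarith
    have hsum_lb : (N:ℝ) * (1/(2*M)) ≤ ∑ n ∈ Finset.range N, 1/(((n:ℝ)+1)^2 + M*(1-(1-a)^(n+1))) := by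
      calc (N:ℝ) * (1/(2*M)) = ∑ _n ∈ Finset.range N, 1/(2*M) := by
            rw [Finset.sum_const, Finset.card_range]; simp [nsmul_eq_mul]
        _ ≤ _ := Finset.sum_le_sum hterm
    have htsum_lb : ∑ n ∈ Finset.range N, 1/(((n:ℝ)+1)^2 + M*(1-(1-a)^(n+1)))
        ≤ ∑' n : ℕ, 1/(((n:ℝ)+1)^2 + M*(1-(1-a)^(n+1))) :=
      Summable.sum_le_tsum _ (fun i _ => hnn i) hGsum
    have hfinal : 1/(4 * Real.sqrt M) ≤ (N:ℝ) * (1/(2*M)) := by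
      rw [mul_one_div, div_le_div_iff₀ (by positivity) (by positivity)]
      nlinarith [hNlb, h2M, hsqM2]
    linarith
  · -- upper bound
    have h1 : (∑' n : ℕ, 1/(((n:ℝ)+1)^2 + M*(1-(1-a)^(n+1))))
        ≤ ∑' n : ℕ, 2 * (1/((n:ℝ)+1+s)^2) :=
      Summable.tsum_le_tsum hub hGsum (hsq_sum.mul_left 2)
    have h2 : (∑' n : ℕ, 2 * (1/((n:ℝ)+1+s)^2)) = 2 * ∑' n : ℕ, 1/((n:ℝ)+1+s)^2 :=
      tsum_mul_left
    have h3 : 2 * (∑' n : ℕ, 1/((n:ℝ)+1+s)^2) ≤ 2 * (1/s) := by linarith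
    rw [h2] at h1
    calc _ ≤ 2 * (1/s) := le_trans h1 h3
      _ = 2 / s := by ring

lemma sqrt_tendsto_atTop : Tendsto Real.sqrt atTop atTop := by
  apply tendsto_atTop_atTop.2
  intro b
  refine ⟨b^2, fun x hx => ?_⟩
  calc b ≤ |b| := le_abs_self b
    _ = Real.sqrt (b^2) := (Real.sqrt_sq_eq_abs b).symm
    _ ≤ Real.sqrt x := Real.sqrt_le_sqrt hx

/-- Mean exit time for a point-like target (ε = 0). -/
noncomputable def meanExitTime (D1 D2 a lam : ℝ) : ℝ :=
  2 / D1 * (1 + lam * (1 - (1 - a) ^ 2) / (4 * D2)) *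
    ∑' n : ℕ+, 1 / ((n : ℝ) ^ 2 + lam / D1 * (1 - (1 - a) ^ (n : ℕ)))

theorem stmt_4 (D1 D2 a : ℝ) (hD1 : 0 < D1) (hD2 : 0 < D2) (ha : 0 < a) (ha1 : a < 1) :
    Tendsto (meanExitTime D1 D2 a) atTop atTop ∧
    (∃ c C : ℝ, 0 < c ∧ ∀ᶠ lam in atTop,
      c ≤ meanExitTime D1 D2 a lam / Real.sqrt lam ∧
        meanExitTime D1 D2 a lam / Real.sqrt lam ≤ C) := by
  set c0 := (1 - (1-a)^2)/(4*D2) with hc0def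
  have hpow : (1-a)^2 < 1 := by nlinarith
  have hc0 : 0 < c0 := div_pos (by nlinarith) (by positivity)
  set d := Real.sqrt D1 with hddef
  have hd : 0 < d := Real.sqrt_pos.2 hD1
  have hd2 : d^2 = D1 := Real.sq_sqrt hD1.le
  set b := Real.sqrt a with hbdef
  have hb : 0 < b := Real.sqrt_pos.2 ha
  have hb2 : b^2 = a := Real.sq_sqrt ha.le
  set c := c0/(2*d) with hcdef
  set C := 8*c0/(d*b) with hCdef
  have hc : 0 < c := by rw [hcdef]; positivity
  -- key eventual bound
  have key : ∀ᶠ lam in atTop, c * Real.sqrt lam ≤ meanExitTime D1 D2 a lam ∧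
      meanExitTime D1 D2 a lam ≤ C * Real.sqrt lam := by
    rw [eventually_atTop]
    refine ⟨max (4*D1) (1/c0), fun lam hlam => ?_⟩
    have hl1 : 4*D1 ≤ lam := le_trans (le_max_left _ _) hlam
    have hl2 : 1 ≤ lam * c0 := by
      have : 1/c0 ≤ lam := le_trans (le_max_right _ _) hlam
      rw [div_le_iff₀ hc0] at this
      linarith
    have hlam0 : 0 < lam := by linarith
    set t := Real.sqrt lam with htdef
    have ht : 0 < t := Real.sqrt_pos.2 hlam0
    have ht2 : t^2 = lam := Real.sq_sqrt hlam0.le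
    -- rewrite the PNat tsum as a Nat tsum
    have hSeq : (∑' n : ℕ+, 1 / ((n : ℝ) ^ 2 + lam / D1 * (1 - (1 - a) ^ (n : ℕ))))
        = ∑' n : ℕ, 1/(((n:ℝ)+1)^2 + lam/D1*(1-(1-a)^(n+1))) := by
      rw [← Equiv.pnatEquivNat.symm.tsum_eq]
      apply tsum_congr
      intro n
      have h1 : ((Equiv.pnatEquivNat.symm n : ℕ+) : ℕ) = n + 1 := by
        simp [Equiv.pnatEquivNat, Nat.succPNat_coe]
      rw [h1]
      push_cast
      ring_nf
    obtain ⟨hSlb, hSub⟩ := tsum_G_bounds D1 a lam hD1 ha ha1 hl1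
    set S := ∑' n : ℕ, 1/(((n:ℝ)+1)^2 + lam/D1*(1-(1-a)^(n+1))) with hSdef
    have hS0 : 0 ≤ S := le_trans (by positivity) hSlb
    -- bounds on the prefactor
    have hPc0 : lam * (1 - (1-a)^2) / (4*D2) = lam * c0 := by
      rw [hc0def]; ring
    set P := 1 + lam * (1 - (1-a)^2) / (4*D2) with hPdef
    have hP1 : lam * c0 ≤ P := by rw [hPdef, hPc0]; linarith
    have hP2 : P ≤ 2 * (lam * c0) := by rw [hPdef, hPc0]; linarith
    have hP0 : 0 ≤ P := by nlinarith
    have hmE : meanExitTime D1 D2 a lam = 2/D1 * P * S := by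
      rw [meanExitTime, hSeq]
    -- sqrt computations
    have hsqM : Real.sqrt (lam/D1) = t/d := Real.sqrt_div hlam0.le D1
    have hsqMa : Real.sqrt (lam/D1 * a) = (t/d) * b := by
      rw [Real.sqrt_mul (by positivity) a, hsqM]
    rw [hsqM] at hSlb
    rw [hsqMa] at hSub
    constructor
    · -- lower bound
      have hid : 2/D1 * (lam * c0) * (1/(4*(t/d))) = c * t := by
        rw [hcdef, ← hd2, ← ht2]
        field_simp
        ring
      calc c * t = 2/D1 * (lam * c0) * (1/(4*(t/d))) := hid.symm
        _ ≤ 2/D1 * P * S := by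
            apply mul_le_mul
            · apply mul_le_mul_of_nonneg_left hP1 (by positivity)
            · exact hSlb
            · positivity
            · positivity
        _ = meanExitTime D1 D2 a lam := hmE.symm
    · -- upper bound
      have hid : 2/D1 * (2*(lam * c0)) * (2/((t/d)*b)) = C * t := by
        rw [hCdef, ← hd2, ← ht2]
        field_simp
        ring
      calc meanExitTime D1 D2 a lam = 2/D1 * P * S := hmE
        _ ≤ 2/D1 * (2*(lam * c0)) * (2/((t/d)*b)) := by
            apply mul_le_mul
            · apply mul_le_mul_of_nonneg_left hP2 (by positivity)
            · exact hSub
            · exact hS0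
            · positivity
        _ = C * t := hid
  constructor
  · apply tendsto_atTop_mono' atTop (key.mono (fun lam h => h.1))
    exact (sqrt_tendsto_atTop).const_mul_atTop hc
  · refine ⟨c, C, hc, ?_⟩
    filter_upwards [key, eventually_gt_atTop 0] with lam hk hl0
    have ht : 0 < Real.sqrt lam := Real.sqrt_pos.2 hl0
    constructor
    · rw [le_div_iff₀ ht]; exact hk.1
    · rw [div_le_iff₀ ht]; exact hk.2
end

section
/- With ⟨t₁⟩(λ) = (2/D₁)·(1 + λ(1-(1-a)²)/(4D₂))·∑_{n≥1} 1/(n² + (λ/D₁)(1-(1-a)ⁿ)), the derivative at λ = 0 equals (2/D₁)·( (1-(1-a)²)/(4D₂) · π²/6 − (1/D₁)·∑_{n≥1}(1-(1-a)ⁿ)/n⁴ ). In particular this derivative is negative if and only if D₂ > D₁·π²(1-(1-a)²) / (24·∑_{n≥1}(1-(1-a)ⁿ)/n⁴). -/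
open Real Filter

lemma aux_iff (d1 d2 t : ℝ) (k : ℝ) (hd1 : 0 < d1) (hd2 : 0 < d2) (ht : 0 < t)
    (hk : 0 < k) :
    2 / d1 * (k / (4 * d2) * (π ^ 2 / 6) - 1 / d1 * t) < 0 ↔
      d2 > d1 * π ^ 2 * k / (24 * t) := by
  have hpi : (0:ℝ) < π ^ 2 := by positivity
  rw [gt_iff_lt, div_lt_iff₀ (by positivity : (0:ℝ) < 24 * t)]
  constructor
  · intro h
    have hX : k / (4 * d2) * (π ^ 2 / 6) - 1 / d1 * t < 0 := by
      by_contra hc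
      push_neg at hc
      nlinarith [mul_nonneg (by positivity : (0:ℝ) ≤ 2 / d1) hc]
    have h2 : k / (4 * d2) * (π ^ 2 / 6) < t / d1 := by
      have : 1 / d1 * t = t / d1 := by ring
      linarith [hX]
    have h3 : k * π ^ 2 / (24 * d2) < t / d1 := by
      have : k / (4 * d2) * (π ^ 2 / 6) = k * π ^ 2 / (24 * d2) := by ring
      linarith [h2, this.symm.le]
    rw [div_lt_div_iff₀ (by positivity) hd1] at h3
    nlinarith [h3]
  · intro h
    have h3 : k * π ^ 2 / (24 * d2) < t / d1 := by
      rw [div_lt_div_iff₀ (by positivity) hd1]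
      nlinarith [h]
    have h2 : k / (4 * d2) * (π ^ 2 / 6) < 1 / d1 * t := by
      have e1 : k / (4 * d2) * (π ^ 2 / 6) = k * π ^ 2 / (24 * d2) := by ring
      have e2 : (1:ℝ) / d1 * t = t / d1 := by ring
      rw [e1, e2]; exact h3
    have := sub_neg.mpr h2
    nlinarith [mul_pos (by positivity : (0:ℝ) < 2 / d1) (neg_pos.mpr this)]



lemma deriv_part (D1 D2 a : ℝ) (hD1 : 0 < D1) (hD2 : 0 < D2) (ha : 0 < a) (ha1 : a < 1) :
    HasDerivAt (fun lam => 2 / D1 * (1 + lam * (1 - (1 - a) ^ 2) / (4 * D2)) *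
      ∑' n : ℕ+, 1 / ((n : ℝ) ^ 2 + lam / D1 * (1 - (1 - a) ^ (n : ℕ))))
      (2 / D1 * ((1 - (1 - a) ^ 2) / (4 * D2) * (π ^ 2 / 6) -
        1 / D1 * ∑' n : ℕ+, (1 - (1 - a) ^ (n : ℕ)) / (n : ℝ) ^ 4)) 0 := by
  set b : ℕ+ → ℝ := fun n => 1 - (1 - a) ^ (n : ℕ) with hb
  have hq0 : 0 < 1 - a := by linarith
  have hq1 : 1 - a < 1 := by linarith
  have hb0 : ∀ n : ℕ+, 0 < b n := by
    intro n
    have : (1 - a) ^ (n : ℕ) < 1 := pow_lt_one₀ hq0.le hq1 n.pos.ne'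
    simp [hb]; linarith
  have hb1 : ∀ n : ℕ+, b n ≤ 1 := by
    intro n
    have : 0 < (1 - a) ^ (n : ℕ) := pow_pos hq0 _
    simp [hb]; linarith
  -- the terms and their derivatives
  set g : ℕ+ → ℝ → ℝ := fun n lam => 1 / ((n : ℝ) ^ 2 + lam / D1 * b n) with hg
  set g' : ℕ+ → ℝ → ℝ := fun n lam => -(b n / D1) / ((n : ℝ) ^ 2 + lam / D1 * b n) ^ 2 with hg'
  have hn1 : ∀ n : ℕ+, (1:ℝ) ≤ (n:ℝ) := by
    intro n; exact_mod_cast n.one_le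
  have hdenom : ∀ (n : ℕ+) (y : ℝ), y ∈ Set.Ioi (-(D1/2)) →
      (n:ℝ)^2/2 ≤ (n : ℝ) ^ 2 + y / D1 * b n := by
    intro n y hy
    have hr : -(1/2 : ℝ) < y / D1 := by
      rw [lt_div_iff₀ hD1]; have := Set.mem_Ioi.mp hy; nlinarith
    have hn2 : (1:ℝ) ≤ (n:ℝ)^2 := by nlinarith [hn1 n]
    have key : ∀ B : ℝ, 0 < B → B ≤ 1 → (n:ℝ)^2/2 ≤ (n:ℝ)^2 + y/D1 * B := by
      intro B hB0 hB1
      have h1 : -(B / 2) ≤ y / D1 * B := by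
        nlinarith [mul_nonneg (by linarith : (0:ℝ) ≤ y / D1 + 1/2) hB0.le]
      linarith
    exact key (b n) (hb0 n) (hb1 n)
  have hdpos : ∀ (n : ℕ+) (y : ℝ), y ∈ Set.Ioi (-(D1/2)) →
      0 < (n : ℝ) ^ 2 + y / D1 * b n := by
    intro n y hy
    have := hdenom n y hy
    nlinarith [hn1 n]
  have hderiv : ∀ (n : ℕ+) (y : ℝ), y ∈ Set.Ioi (-(D1/2)) → HasDerivAt (g n) (g' n y) y := by
    intro n y hy
    have hne : (n : ℝ) ^ 2 + y / D1 * b n ≠ 0 := (hdpos n y hy).ne'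
    have hd : HasDerivAt (fun lam : ℝ => (n : ℝ) ^ 2 + lam / D1 * b n) (b n / D1) y := by
      rw [show (fun lam : ℝ => (n:ℝ)^2 + lam / D1 * b n)
          = (fun lam : ℝ => (n:ℝ)^2 + lam * (b n / D1)) from funext fun lam => by ring]
      simpa using ((hasDerivAt_id y).mul_const (b n / D1)).const_add ((n:ℝ)^2)
    simpa only [hg, hg', one_div, Pi.inv_def] using hd.inv hne
  -- summable bound
  have hsum4 : Summable (fun n : ℕ+ => 1 / ((n:ℝ))^4) := by
    have h := Real.summable_one_div_nat_pow.mpr (show 1 < 4 by norm_num)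
    exact h.comp_injective PNat.coe_injective
  set u : ℕ+ → ℝ := fun n => 4 / D1 * (1 / (n:ℝ)^4) with hu
  have hu_sum : Summable u := hsum4.mul_left _
  have hbound : ∀ (n : ℕ+) (y : ℝ), y ∈ Set.Ioi (-(D1/2)) → ‖g' n y‖ ≤ u n := by
    intro n y hy
    have hd := hdenom n y hy
    have hp := hdpos n y hy
    have hnp : (0:ℝ) < (n:ℝ)^2 := by nlinarith [hn1 n]
    rw [hg']
    have : ‖-(b n / D1) / ((n : ℝ) ^ 2 + y / D1 * b n) ^ 2‖
        = (b n / D1) / ((n : ℝ) ^ 2 + y / D1 * b n) ^ 2 := by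
      rw [Real.norm_eq_abs, abs_div, abs_neg, abs_of_nonneg (div_nonneg (hb0 n).le hD1.le),
        abs_of_nonneg (by positivity)]
    rw [this]
    have h2 : ((n:ℝ)^2/2)^2 ≤ ((n : ℝ) ^ 2 + y / D1 * b n) ^ 2 := by
      apply pow_le_pow_left₀ (by positivity) hd
    have hnum : b n / D1 ≤ 1 / D1 := by gcongr; exact hb1 n
    calc (b n / D1) / ((n : ℝ) ^ 2 + y / D1 * b n) ^ 2
        ≤ (1 / D1) / (((n:ℝ)^2/2)^2) := div_le_div₀ (by positivity) hnum (by positivity) h2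
      _ = u n := by
          rw [hu]
          have : (n:ℝ) ≠ 0 := by positivity
          field_simp
          ring
  -- Basel at the point 0
  have hzeta : HasSum (fun n : ℕ+ => (1:ℝ)/((n:ℕ):ℝ)^2) (π^2/6) := by
    apply (Function.Injective.hasSum_iff PNat.coe_injective ?_).mpr hasSum_zeta_two
    intro x hx
    have hx0 : x = 0 := by
      by_contra h
      exact hx ⟨⟨x, Nat.pos_of_ne_zero h⟩, rfl⟩
    simp [hx0]
  have hmem : (0:ℝ) ∈ Set.Ioi (-(D1/2)) := Set.mem_Ioi.mpr (by linarith)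
  have hg0sum : Summable (fun n : ℕ+ => g n 0) := by
    have he : (fun n : ℕ+ => g n 0) = fun n : ℕ+ => (1:ℝ)/((n:ℕ):ℝ)^2 := by
      funext n; simp [hg]
    rw [he]; exact hzeta.summable
  have hS : HasDerivAt (fun lam => ∑' n : ℕ+, g n lam) (∑' n : ℕ+, g' n 0) 0 :=
    hasDerivAt_tsum_of_isPreconnected hu_sum isOpen_Ioi (isPreconnected_Ioi)
      hderiv hbound hmem hg0sum hmem
  have hS0 : (∑' n : ℕ+, g n 0) = π^2/6 := by
    have he : (fun n : ℕ+ => g n 0) = fun n : ℕ+ => (1:ℝ)/((n:ℕ):ℝ)^2 := by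
      funext n; simp [hg]
    rw [he, hzeta.tsum_eq]
  have hg'0 : (∑' n : ℕ+, g' n 0) = -(1/D1) * ∑' n : ℕ+, b n / (n:ℝ)^4 := by
    rw [← tsum_mul_left]
    congr 1; funext n
    rw [hg']
    have hne : ((n:ℕ):ℝ) ≠ 0 := by positivity
    have hsq : (((n:ℕ):ℝ)^2)^2 = ((n:ℕ):ℝ)^4 := by ring
    simp only [zero_div, zero_mul, add_zero, hsq]
    rw [neg_div, neg_mul, neg_inj, div_div, div_mul_eq_mul_div, one_mul, div_div, mul_comm D1]
  have h1 : HasDerivAt (fun lam : ℝ => 2/D1 * (1 + lam * (1-(1-a)^2) / (4*D2)))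
      (2/D1 * ((1-(1-a)^2)/(4*D2))) 0 := by
    have h0 : HasDerivAt (fun lam : ℝ => 1 + lam * (1-(1-a)^2) / (4*D2))
        ((1-(1-a)^2)/(4*D2)) 0 := by
      simpa using (((hasDerivAt_id (0:ℝ)).mul_const ((1-(1-a)^2))).div_const (4*D2)).const_add 1
    exact h0.const_mul (2/D1)
  have hfinal := h1.mul hS
  refine hfinal.congr_deriv ?_
  rw [hS0, hg'0]
  ring

theorem stmt_5 (D1 D2 a : ℝ) (hD1 : 0 < D1) (hD2 : 0 < D2) (ha : 0 < a) (ha1 : a < 1) :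
    HasDerivAt (meanExitTime D1 D2 a)
      (2 / D1 * ((1 - (1 - a) ^ 2) / (4 * D2) * (π ^ 2 / 6) -
        1 / D1 * ∑' n : ℕ+, (1 - (1 - a) ^ (n : ℕ)) / (n : ℝ) ^ 4)) 0 ∧
    (2 / D1 * ((1 - (1 - a) ^ 2) / (4 * D2) * (π ^ 2 / 6) -
        1 / D1 * ∑' n : ℕ+, (1 - (1 - a) ^ (n : ℕ)) / (n : ℝ) ^ 4) < 0 ↔
      D2 > D1 * π ^ 2 * (1 - (1 - a) ^ 2) /
        (24 * ∑' n : ℕ+, (1 - (1 - a) ^ (n : ℕ)) / (n : ℝ) ^ 4)) := by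
  constructor
  · exact deriv_part D1 D2 a hD1 hD2 ha ha1
  · have hq0 : 0 < 1 - a := by linarith
    have hq1 : 1 - a < 1 := by linarith
    have hk : 0 < 1 - (1 - a) ^ 2 := by nlinarith
    have hsum4 : Summable (fun n : ℕ+ => 1 / ((n:ℝ))^4) := by
      have h := Real.summable_one_div_nat_pow.mpr (show 1 < 4 by norm_num)
      exact h.comp_injective PNat.coe_injective
    have hbn : ∀ n : ℕ+, 0 < 1 - (1 - a) ^ (n : ℕ) := by
      intro n
      have : (1 - a) ^ (n : ℕ) < 1 := pow_lt_one₀ hq0.le hq1 n.pos.ne'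
      linarith
    have hTsum : Summable (fun n : ℕ+ => (1 - (1 - a) ^ (n : ℕ)) / (n : ℝ) ^ 4) := by
      apply Summable.of_nonneg_of_le (fun n => div_nonneg (hbn n).le (by positivity)) _ hsum4
      intro n
      gcongr
      linarith [pow_nonneg hq0.le (n:ℕ)]
    have hT : 0 < ∑' n : ℕ+, (1 - (1 - a) ^ (n : ℕ)) / (n : ℝ) ^ 4 := by
      apply Summable.tsum_pos hTsum (fun n => div_nonneg (hbn n).le (by positivity)) 1
      have := hbn 1
      positivity
    exact aux_iff D1 D2 _ _ hD1 hD2 hT hk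
end

section
/- Let T̃ be the operator on L²([0,π]) defined by (T̃f)(θ) = ∫_θ^{π-ε} ∫_0^{θ₁} f(θ₂) dθ₂ dθ₁ for 0 ≤ θ < π-ε and (T̃f)(θ) = 0 for π-ε ≤ θ ≤ π, where 0 ≤ ε < π. Then T̃ is a bounded self-adjoint non-negative operator on L²([0,π]). -/
open Real MeasureTheory

/-- The operator T̃ of the paper: (T̃f)(θ) = ∫_θ^{π-ε} ∫_0^{θ₁} f(θ₂) dθ₂ dθ₁ for θ < π-ε,
and 0 for θ ≥ π-ε. -/
noncomputable def Ttil (ε : ℝ) (f : ℝ → ℝ) (θ : ℝ) : ℝ :=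
  if θ < π - ε then ∫ θ₁ in θ..(π - ε), ∫ θ₂ in (0:ℝ)..θ₁, f θ₂ else 0


lemma swap_aux (a : ℝ) (u v : ℝ → ℝ)
    (hu : IntegrableOn u (Set.Ioc 0 a)) (hv : IntegrableOn v (Set.Ioc 0 a)) :
    ∫ θ in Set.Ioc (0:ℝ) a, v θ * (∫ t in θ..a, u t) =
      ∫ t in Set.Ioc (0:ℝ) a, u t * (∫ θ in (0:ℝ)..t, v θ) := by
  set μ := volume.restrict (Set.Ioc (0:ℝ) a) with hμ
  set Φ : ℝ × ℝ → ℝ :=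
    Set.indicator {p : ℝ × ℝ | p.1 < p.2} (fun p => v p.1 * u p.2) with hΦdef
  have hS : MeasurableSet {p : ℝ × ℝ | p.1 < p.2} :=
    measurableSet_lt measurable_fst measurable_snd
  have hΦ : Integrable Φ (μ.prod μ) := (hv.mul_prod hu).indicator hS
  have key1 : ∀ θ ∈ Set.Ioc (0:ℝ) a,
      v θ * (∫ t in θ..a, u t) = ∫ t in Set.Ioc (0:ℝ) a, Φ (θ, t) := by
    intro θ hθ
    have h1 : (fun t => Φ (θ, t)) = Set.indicator (Set.Ioi θ) (fun t => v θ * u t) := by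
      ext t
      by_cases h : θ < t <;> simp [hΦdef, Set.indicator_apply, h]
    rw [h1, setIntegral_indicator measurableSet_Ioi, Set.Ioc_inter_Ioi,
      sup_eq_right.mpr hθ.1.le, intervalIntegral.integral_of_le hθ.2,
      ← integral_const_mul]
  have key2 : ∀ t ∈ Set.Ioc (0:ℝ) a,
      (∫ θ in Set.Ioc (0:ℝ) a, Φ (θ, t)) = u t * (∫ θ in (0:ℝ)..t, v θ) := by
    intro t ht
    have h1 : (fun θ => Φ (θ, t)) = Set.indicator (Set.Iio t) (fun θ => v θ * u t) := by
      ext θ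
      by_cases h : θ < t <;> simp [hΦdef, Set.indicator_apply, h]
    have h2 : Set.Ioc (0:ℝ) a ∩ Set.Iio t = Set.Ioo 0 t := by
      ext x
      simp only [Set.mem_inter_iff, Set.mem_Ioc, Set.mem_Iio, Set.mem_Ioo]
      constructor
      · rintro ⟨⟨h1, h2⟩, h3⟩; exact ⟨h1, h3⟩
      · rintro ⟨h1, h3⟩; exact ⟨⟨h1, le_trans h3.le ht.2⟩, h3⟩
    rw [h1, setIntegral_indicator measurableSet_Iio, h2, ← integral_Ioc_eq_integral_Ioo,
      ← intervalIntegral.integral_of_le ht.1.le, intervalIntegral.integral_mul_const, mul_comm]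
  calc ∫ θ in Set.Ioc (0:ℝ) a, v θ * (∫ t in θ..a, u t)
      = ∫ θ in Set.Ioc (0:ℝ) a, ∫ t in Set.Ioc (0:ℝ) a, Φ (θ, t) :=
        setIntegral_congr_fun measurableSet_Ioc key1
    _ = ∫ t in Set.Ioc (0:ℝ) a, ∫ θ in Set.Ioc (0:ℝ) a, Φ (θ, t) := by
        exact MeasureTheory.integral_integral_swap (by exact hΦ)
    _ = ∫ t in Set.Ioc (0:ℝ) a, u t * (∫ θ in (0:ℝ)..t, v θ) :=
        setIntegral_congr_fun measurableSet_Ioc key2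

lemma Ttil_eq_of_le (ε : ℝ) (f : ℝ → ℝ) {θ : ℝ} (hθ : θ ≤ π - ε) :
    Ttil ε f θ = ∫ θ₁ in θ..(π - ε), ∫ θ₂ in (0:ℝ)..θ₁, f θ₂ := by
  rcases lt_or_eq_of_le hθ with h | h
  · rw [Ttil, if_pos h]
  · rw [Ttil, if_neg (by simp [h]), h, intervalIntegral.integral_same]

lemma Ttil_eq_zero (ε : ℝ) (f : ℝ → ℝ) {θ : ℝ} (hθ : π - ε ≤ θ) :
    Ttil ε f θ = 0 := by
  rw [Ttil, if_neg (not_lt.mpr hθ)]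

lemma reduce_aux (a : ℝ) (ha0 : 0 ≤ a) (haπ : a ≤ π) (h : ℝ → ℝ)
    (hzero : ∀ θ ∈ Set.Ioc a π, h θ = 0) :
    ∫ θ in Set.Icc (0:ℝ) π, h θ = ∫ θ in Set.Ioc (0:ℝ) a, h θ := by
  rw [integral_Icc_eq_integral_Ioc]
  have h1 : ∀ θ ∈ Set.Ioc (0:ℝ) π, h θ = (Set.Ioc (0:ℝ) a).indicator h θ := by
    intro θ hθ
    by_cases hc : θ ≤ a
    · rw [Set.indicator_of_mem (Set.mem_Ioc.mpr ⟨hθ.1, hc⟩)]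
    · rw [Set.indicator_of_notMem (by simp [hc]), hzero θ ⟨not_le.mp hc, hθ.2⟩]
  rw [setIntegral_congr_fun measurableSet_Ioc h1,
    setIntegral_indicator measurableSet_Ioc]
  congr 1
  rw [Set.Ioc_inter_Ioc]
  simp [haπ]

lemma Ff_integrableOn {f : ℝ → ℝ} (hfi : IntegrableOn f (Set.Icc 0 π)) (a : ℝ)
    (haπ : a ≤ π) : IntegrableOn (fun x => ∫ t in (0:ℝ)..x, f t) (Set.Ioc 0 a) := by
  have hc : ContinuousOn (fun x => ∫ t in (0:ℝ)..x, f t) (Set.Icc 0 π) := by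
    refine (intervalIntegral.continuousOn_primitive hfi).congr ?_
    intro x hx
    exact intervalIntegral.integral_of_le hx.1
  rcases le_or_gt 0 a with ha0 | ha0
  · exact ((hc.mono (Set.Icc_subset_Icc le_rfl haπ)).integrableOn_Icc).mono_set
      Set.Ioc_subset_Icc_self
  · rw [Set.Ioc_eq_empty (by linarith)]
    simp [IntegrableOn]

lemma Ttil_key (ε : ℝ) (hε0 : 0 ≤ ε) (hε : ε < π) (f g : ℝ → ℝ)
    (hfi : IntegrableOn f (Set.Icc 0 π)) (hgi : IntegrableOn g (Set.Icc 0 π)) :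
    ∫ θ in Set.Icc (0:ℝ) π, Ttil ε f θ * g θ
      = ∫ t in Set.Ioc (0:ℝ) (π - ε),
          (∫ s in (0:ℝ)..t, f s) * (∫ s in (0:ℝ)..t, g s) := by
  have ha0 : 0 ≤ π - ε := by linarith
  have haπ : π - ε ≤ π := by linarith
  have hFf := Ff_integrableOn hfi (π - ε) haπ
  have hg' : IntegrableOn g (Set.Ioc 0 (π - ε)) :=
    hgi.mono_set (le_trans Set.Ioc_subset_Icc_self (Set.Icc_subset_Icc le_rfl haπ))
  rw [reduce_aux (π - ε) ha0 haπ _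
    (fun θ hθ => by rw [Ttil_eq_zero ε f hθ.1.le, zero_mul])]
  have h1 : ∀ θ ∈ Set.Ioc (0:ℝ) (π - ε),
      Ttil ε f θ * g θ = g θ * (∫ t in θ..(π - ε), ∫ s in (0:ℝ)..t, f s) := by
    intro θ hθ
    rw [Ttil_eq_of_le ε f hθ.2, mul_comm]
  rw [setIntegral_congr_fun measurableSet_Ioc h1]
  exact swap_aux (π - ε) _ g hFf hg'

theorem stmt_7 (ε : ℝ) (hε0 : 0 ≤ ε) (hε : ε < π) :
    (∃ C : ℝ, 0 ≤ C ∧ ∀ f : ℝ → ℝ, MemLp f 2 (volume.restrict (Set.Icc 0 π)) →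
      (∫ θ in Set.Icc (0:ℝ) π, (Ttil ε f θ) ^ 2) ≤ C * ∫ θ in Set.Icc (0:ℝ) π, (f θ) ^ 2) ∧
    (∀ f g : ℝ → ℝ, MemLp f 2 (volume.restrict (Set.Icc 0 π)) →
      MemLp g 2 (volume.restrict (Set.Icc 0 π)) →
      (∫ θ in Set.Icc (0:ℝ) π, Ttil ε f θ * g θ) =
        ∫ θ in Set.Icc (0:ℝ) π, f θ * Ttil ε g θ) ∧
    (∀ f : ℝ → ℝ, MemLp f 2 (volume.restrict (Set.Icc 0 π)) →
      0 ≤ ∫ θ in Set.Icc (0:ℝ) π, Ttil ε f θ * f θ) := by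
  have hπ : (0:ℝ) < π := Real.pi_pos
  have ha0 : 0 ≤ π - ε := by linarith
  have haπ : π - ε ≤ π := by linarith
  haveI : IsFiniteMeasure (volume.restrict (Set.Icc (0:ℝ) π)) := by
    constructor
    rw [Measure.restrict_apply_univ]
    exact measure_Icc_lt_top
  have hint : ∀ f : ℝ → ℝ, MemLp f 2 (volume.restrict (Set.Icc 0 π)) →
      IntegrableOn f (Set.Icc 0 π) := fun f hf => hf.integrable one_le_two
  refine ⟨⟨π ^ 4, by positivity, ?_⟩, ?_, ?_⟩
  · -- boundedness
    intro f hf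
    have hfi := hint f hf
    set M : ℝ := ∫ t in (0:ℝ)..π, |f t| with hM
    have hfabs : IntervalIntegrable (fun t => |f t|) volume 0 π := by
      have : IntervalIntegrable f volume 0 π := by
        rw [intervalIntegrable_iff_integrableOn_Ioc_of_le hπ.le]
        exact hfi.mono_set Set.Ioc_subset_Icc_self
      exact this.abs
    have hM0 : 0 ≤ M :=
      intervalIntegral.integral_nonneg hπ.le (fun t _ => abs_nonneg _)
    -- pointwise bound
    have hbd : ∀ θ ∈ Set.Icc (0:ℝ) π, (Ttil ε f θ) ^ 2 ≤ (π * M) ^ 2 := by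
      intro θ hθ
      have habs : |Ttil ε f θ| ≤ π * M := by
        by_cases hc : θ < π - ε
        · rw [Ttil, if_pos hc]
          have hb : ∀ x ∈ Set.uIoc θ (π - ε), ‖∫ s in (0:ℝ)..x, f s‖ ≤ M := by
            intro x hx
            rw [Set.uIoc_of_le hc.le] at hx
            have hx0 : 0 ≤ x := le_trans hθ.1 hx.1.le
            have hxπ : x ≤ π := le_trans hx.2 haπ
            rw [Real.norm_eq_abs]
            calc |∫ s in (0:ℝ)..x, f s| ≤ ∫ s in (0:ℝ)..x, |f s| :=
                  intervalIntegral.abs_integral_le_integral_abs hx0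
              _ ≤ M := by
                  refine intervalIntegral.integral_mono_interval le_rfl hx0 hxπ ?_ hfabs
                  filter_upwards with t using abs_nonneg _
          calc |∫ t in θ..(π - ε), ∫ s in (0:ℝ)..t, f s| ≤ M * |π - ε - θ| :=
                intervalIntegral.norm_integral_le_of_norm_le_const hb
            _ ≤ π * M := by
                rw [abs_of_nonneg (by linarith)]
                nlinarith [hθ.1]
        · rw [Ttil, if_neg hc, abs_zero]; positivity
      calc (Ttil ε f θ) ^ 2 = |Ttil ε f θ| ^ 2 := (sq_abs _).symm
        _ ≤ (π * M) ^ 2 := by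
            have := abs_nonneg (Ttil ε f θ)
            nlinarith
    have step1 : (∫ θ in Set.Icc (0:ℝ) π, (Ttil ε f θ) ^ 2)
        ≤ ∫ _ in Set.Icc (0:ℝ) π, (π * M) ^ 2 := by
      refine integral_mono_of_nonneg ?_ (integrable_const _) ?_
      · filter_upwards with θ using sq_nonneg _
      · filter_upwards [ae_restrict_mem measurableSet_Icc] with θ hθ using hbd θ hθ
    have hvol : (∫ _ in Set.Icc (0:ℝ) π, (π * M) ^ 2) = π * (π * M) ^ 2 := by
      rw [setIntegral_const, Real.volume_real_Icc_of_le hπ.le, smul_eq_mul]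
      norm_num [ENNReal.toReal_ofReal hπ.le]
    -- Cauchy-Schwarz: M ^ 2 ≤ π * ∫ f ^ 2
    set I : ℝ := ∫ θ in Set.Icc (0:ℝ) π, (f θ) ^ 2 with hI
    have hI0 : 0 ≤ I := setIntegral_nonneg measurableSet_Icc (fun θ _ => sq_nonneg _)
    have hCS : M ^ 2 ≤ π * I := by
      have hconj : Real.HolderConjugate 2 2 := Real.holderConjugate_iff.mpr ⟨one_lt_two, by norm_num⟩
      have hfn : MemLp (fun x => |f x|) (ENNReal.ofReal 2)
          (volume.restrict (Set.Icc (0:ℝ) π)) := by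
        have := hf.norm
        simpa [Real.norm_eq_abs, ENNReal.ofReal_ofNat] using this
      have hgn : MemLp (fun _ : ℝ => (1:ℝ)) (ENNReal.ofReal 2)
          (volume.restrict (Set.Icc (0:ℝ) π)) := memLp_const 1
      have h := integral_mul_le_Lp_mul_Lq_of_nonneg hconj
        (μ := volume.restrict (Set.Icc (0:ℝ) π))
        (Filter.Eventually.of_forall (fun x => abs_nonneg (f x)))
        (Filter.Eventually.of_forall (fun _ => zero_le_one)) hfn hgn
      have hMeq : M = ∫ θ in Set.Icc (0:ℝ) π, |f θ| * 1 := by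
        rw [hM, intervalIntegral.integral_of_le hπ.le, integral_Icc_eq_integral_Ioc]
        simp
      have hf2 : (∫ θ in Set.Icc (0:ℝ) π, |f θ| ^ (2:ℝ)) = I := by
        rw [hI]
        refine setIntegral_congr_fun measurableSet_Icc (fun θ _ => ?_)
        rw [show ((2:ℝ)) = ((2:ℕ):ℝ) by norm_num, Real.rpow_natCast, sq_abs]
      have hone : (∫ _ in Set.Icc (0:ℝ) π, (1:ℝ) ^ (2:ℝ)) = π := by
        rw [show (fun _ : ℝ => (1:ℝ) ^ (2:ℝ)) = fun _ : ℝ => (1:ℝ) by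
          funext x; simp]
        rw [setIntegral_const, Real.volume_real_Icc_of_le hπ.le, smul_eq_mul]
        norm_num [ENNReal.toReal_ofReal hπ.le]
      rw [hf2, hone] at h
      have hMle : M ≤ I ^ (1/2:ℝ) * π ^ (1/2:ℝ) := by rw [hMeq]; exact h
      calc M ^ 2
          ≤ (I ^ (1/2:ℝ) * π ^ (1/2:ℝ)) ^ 2 := pow_le_pow_left₀ hM0 hMle 2
        _ = π * I := by
            rw [mul_pow, ← Real.rpow_natCast (I ^ (1/2:ℝ)) 2,
              ← Real.rpow_natCast (π ^ (1/2:ℝ)) 2,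
              ← Real.rpow_mul hI0, ← Real.rpow_mul hπ.le]
            norm_num [mul_comm]
      -- done
    calc (∫ θ in Set.Icc (0:ℝ) π, (Ttil ε f θ) ^ 2) ≤ π * (π * M) ^ 2 := by
          rw [← hvol]; exact step1
      _ = π ^ 3 * M ^ 2 := by ring
      _ ≤ π ^ 3 * (π * I) :=
          mul_le_mul_of_nonneg_left hCS (le_of_lt (pow_pos hπ 3))
      _ = π ^ 4 * I := by ring
  · -- symmetry
    intro f g hf hg
    rw [Ttil_key ε hε0 hε f g (hint f hf) (hint g hg)]
    have : (∫ θ in Set.Icc (0:ℝ) π, f θ * Ttil ε g θ)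
        = ∫ θ in Set.Icc (0:ℝ) π, Ttil ε g θ * f θ := by
      simp_rw [mul_comm]
    rw [this, Ttil_key ε hε0 hε g f (hint g hg) (hint f hf)]
    simp_rw [mul_comm]
  · -- non-negativity
    intro f hf
    rw [Ttil_key ε hε0 hε f f (hint f hf) (hint f hf)]
    exact setIntegral_nonneg measurableSet_Ioc (fun t _ => mul_self_nonneg _)
end

section
/- Let A and B be compact self-adjoint non-negative operators on a Hilbert space with eigenvalue sequences λₙ(A) and λₙ(B) (in non-increasing order). Suppose λₙ(A) ~ c·n^{−s} as n → ∞ for constants c > 0, s > 0, and λ_N(B) ≤ ρ^N for some 0 ≤ ρ < 1. Then λₙ(A+B) ~ c·n^{−s} as n → ∞. -/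
open RealInnerProductSpace Filter

/-- The n-th largest eigenvalue of a self-adjoint operator, via the max-min
variational characterization. -/
noncomputable def lambdaN {H : Type*} [NormedAddCommGroup H] [InnerProductSpace ℝ H]
    (A : H →L[ℝ] H) (n : ℕ) : ℝ :=
  ⨆ F : {F : Submodule ℝ H // Module.finrank ℝ F = n},
    ⨅ x : {x : H // x ∈ F.1 ∧ x ≠ 0}, ⟪A x.1, x.1⟫ / ⟪x.1, x.1⟫

namespace Stmt15

open Submodule Module

variable {H : Type*} [NormedAddCommGroup H] [InnerProductSpace ℝ H]

/-- Rayleigh quotient. -/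
noncomputable def rq (T : H →L[ℝ] H) (x : H) : ℝ := ⟪T x, x⟫ / ⟪x, x⟫

noncomputable def infR (T : H →L[ℝ] H) (F : Submodule ℝ H) : ℝ :=
  ⨅ x : {x : H // x ∈ F ∧ x ≠ 0}, rq T x.1

lemma lambdaN_eq (T : H →L[ℝ] H) (n : ℕ) :
    lambdaN T n = ⨆ F : {F : Submodule ℝ H // finrank ℝ F = n}, infR T F.1 := rfl

lemma inner_self_pos' {x : H} (hx : x ≠ 0) : (0:ℝ) < ⟪x, x⟫ := by
  rw [real_inner_self_eq_norm_sq]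
  exact pow_pos (norm_pos_iff.2 hx) 2

lemma rq_nonneg {T : H →L[ℝ] H} (hT : ∀ x, 0 ≤ ⟪T x, x⟫) (x : H) : 0 ≤ rq T x :=
  div_nonneg (hT x) real_inner_self_nonneg

lemma rq_le_norm (T : H →L[ℝ] H) (x : H) : rq T x ≤ ‖T‖ := by
  rcases eq_or_ne x 0 with rfl | hx
  · simp [rq]
  · have hpos : (0:ℝ) < ⟪x, x⟫ := inner_self_pos' hx
    rw [rq, div_le_iff₀ hpos]
    calc ⟪T x, x⟫ ≤ ‖T x‖ * ‖x‖ := real_inner_le_norm _ _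
      _ ≤ ‖T‖ * ‖x‖ * ‖x‖ := by
          have := T.le_opNorm x
          nlinarith [norm_nonneg x, norm_nonneg (T x), norm_nonneg T]
      _ = ‖T‖ * ⟪x, x⟫ := by rw [real_inner_self_eq_norm_mul_norm]; ring

lemma rq_smul (T : H →L[ℝ] H) (x : H) (hx : x ≠ 0) :
    ⟪T (‖x‖⁻¹ • x), ‖x‖⁻¹ • x⟫ = rq T x := by
  have hnx : ‖x‖ ≠ 0 := norm_ne_zero_iff.2 hx
  rw [map_smul, real_inner_smul_left, real_inner_smul_right, rq,
    real_inner_self_eq_norm_mul_norm]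
  field_simp

lemma bddAbove_rq (T : H →L[ℝ] H) (W : Submodule ℝ H) :
    BddAbove (Set.range fun x : {x : H // x ∈ W ∧ x ≠ 0} => rq T x.1) := by
  refine ⟨‖T‖, ?_⟩
  rintro y ⟨x, rfl⟩
  exact rq_le_norm T x.1

lemma bddBelow_rq {T : H →L[ℝ] H} (hT : ∀ x, 0 ≤ ⟪T x, x⟫) (W : Submodule ℝ H) :
    BddBelow (Set.range fun x : {x : H // x ∈ W ∧ x ≠ 0} => rq T x.1) := by
  refine ⟨0, ?_⟩
  rintro y ⟨x, rfl⟩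
  exact rq_nonneg hT x.1

lemma infR_nonneg {T : H →L[ℝ] H} (hT : ∀ x, 0 ≤ ⟪T x, x⟫) (F : Submodule ℝ H) :
    0 ≤ infR T F :=
  Real.iInf_nonneg fun x => rq_nonneg hT x.1

lemma infR_le_norm {T : H →L[ℝ] H} (hT : ∀ x, 0 ≤ ⟪T x, x⟫) (F : Submodule ℝ H) :
    infR T F ≤ ‖T‖ := by
  by_cases h : Nonempty {x : H // x ∈ F ∧ x ≠ 0}
  · obtain ⟨x⟩ := h
    exact ciInf_le_of_le (bddBelow_rq hT F) x (rq_le_norm T x.1)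
  · rw [not_nonempty_iff] at h
    rw [infR, Real.iInf_of_isEmpty]
    exact norm_nonneg T

lemma lambdaN_nonneg {T : H →L[ℝ] H} (hT : ∀ x, 0 ≤ ⟪T x, x⟫) (n : ℕ) :
    0 ≤ lambdaN T n :=
  Real.iSup_nonneg fun F => infR_nonneg hT F.1

lemma bddAbove_infR {T : H →L[ℝ] H} (hT : ∀ x, 0 ≤ ⟪T x, x⟫) (n : ℕ) :
    BddAbove (Set.range fun F : {F : Submodule ℝ H // finrank ℝ F = n} => infR T F.1) := by
  refine ⟨‖T‖, ?_⟩
  rintro y ⟨F, rfl⟩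
  exact infR_le_norm hT F.1

lemma lambdaN_le_norm {T : H →L[ℝ] H} (hT : ∀ x, 0 ≤ ⟪T x, x⟫) (n : ℕ) :
    lambdaN T n ≤ ‖T‖ := by
  rw [lambdaN_eq]
  exact Real.iSup_le (fun F => infR_le_norm hT F.1) (norm_nonneg T)


lemma lambdaN_mono_op {T T' : H →L[ℝ] H} (hT : ∀ x, 0 ≤ ⟪T x, x⟫)
    (hT' : ∀ x, 0 ≤ ⟪T' x, x⟫) (h : ∀ x, ⟪T x, x⟫ ≤ ⟪T' x, x⟫) (n : ℕ) :
    lambdaN T n ≤ lambdaN T' n := by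
  rw [lambdaN_eq, lambdaN_eq]
  refine Real.iSup_le (fun F => ?_) (lambdaN_nonneg hT' n)
  have h1 : infR T F.1 ≤ infR T' F.1 := by
    by_cases hne : Nonempty {x : H // x ∈ F.1 ∧ x ≠ 0}
    · refine ciInf_mono (bddBelow_rq hT F.1) fun x => ?_
      have hpos : (0:ℝ) < ⟪x.1, x.1⟫ := inner_self_pos' x.2.2
      unfold rq
      gcongr
      exact h x.1
    · rw [not_nonempty_iff] at hne
      rw [infR, infR, Real.iInf_of_isEmpty, Real.iInf_of_isEmpty]
  exact h1.trans (le_ciSup (bddAbove_infR hT' n) F)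

section FinDim

variable [CompleteSpace H]

lemma span_inf_eq_bot {S : Submodule ℝ H} {x : H} (hx : x ∉ S) :
    S ⊓ span ℝ {x} = ⊥ := by
  rw [eq_bot_iff]
  rintro y ⟨hyS, hyx⟩
  obtain ⟨c, rfl⟩ := Submodule.mem_span_singleton.1 hyx
  rcases eq_or_ne c 0 with rfl | hc
  · simp
  · exact absurd (by simpa [smul_smul, inv_mul_cancel₀ hc] using S.smul_mem c⁻¹ hyS) hx

lemma finrank_sup_span {S : Submodule ℝ H} [FiniteDimensional ℝ S] {x : H} (hx : x ∉ S) :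
    finrank ℝ (S ⊔ span ℝ {x} : Submodule ℝ H) = finrank ℝ S + 1 := by
  have hx0 : x ≠ 0 := fun h => hx (h ▸ S.zero_mem)
  have := Submodule.finrank_sup_add_finrank_inf_eq S (span ℝ {x})
  rw [span_inf_eq_bot hx, finrank_bot, add_zero, finrank_span_singleton hx0] at this
  exact this

lemma exists_finrank_le (V : Submodule ℝ H) (k : ℕ)
    (h : ¬ FiniteDimensional ℝ V ∨ k ≤ finrank ℝ V) :
    ∃ S : Submodule ℝ H, S ≤ V ∧ FiniteDimensional ℝ S ∧ finrank ℝ S = k := by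
  induction k with
  | zero => exact ⟨⊥, bot_le, inferInstance, finrank_bot ℝ H⟩
  | succ k ih =>
    obtain ⟨S, hSV, hfd, hrk⟩ := ih (h.imp id fun hk => (Nat.le_succ k).trans hk)
    have hVS : ¬ V ≤ S := by
      intro hVS
      rcases h with h | h
      · exact h (Submodule.finiteDimensional_of_le (S₂ := S) hVS)
      · haveI : FiniteDimensional ℝ V := Submodule.finiteDimensional_of_le (S₂ := S) hVS
        have := Submodule.finrank_mono hVS
        omega
    obtain ⟨x, hxV, hxS⟩ := SetLike.not_le_iff_exists.1 hVS
    haveI := hfd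
    refine ⟨S ⊔ span ℝ {x}, sup_le hSV ((span_le).2 (by simpa using hxV)), inferInstance, ?_⟩
    rw [finrank_sup_span hxS, hrk]

lemma exists_finrank (hinf : ¬ FiniteDimensional ℝ H) (k : ℕ) :
    ∃ S : Submodule ℝ H, FiniteDimensional ℝ S ∧ finrank ℝ S = k := by
  have htop : ¬ FiniteDimensional ℝ (⊤ : Submodule ℝ H) := fun h =>
    hinf (Module.Finite.equiv (Submodule.topEquiv (R := ℝ) (M := H)))
  obtain ⟨S, _, h1, h2⟩ := exists_finrank_le ⊤ k (Or.inl htop)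
  exact ⟨S, h1, h2⟩

lemma orth_exists_ne_zero (hinf : ¬ FiniteDimensional ℝ H) (S : Submodule ℝ H)
    [FiniteDimensional ℝ S] : ∃ x, x ∈ Sᗮ ∧ x ≠ 0 := by
  have hne : Sᗮ ≠ ⊥ := by
    intro h
    have : S = ⊤ := Submodule.orthogonal_eq_bot_iff.1 h
    exact hinf (Module.Finite.equiv ((LinearEquiv.ofTop S this)))
  obtain ⟨x, hx, hx0⟩ := Submodule.ne_bot_iff _ |>.1 hne
  exact ⟨x, hx, hx0⟩

end FinDim


/-- Sup of the Rayleigh quotient on a submodule. -/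
noncomputable def mW (T : H →L[ℝ] H) (W : Submodule ℝ H) : ℝ :=
  ⨆ x : {x : H // x ∈ W ∧ x ≠ 0}, rq T x.1

lemma mW_nonneg {T : H →L[ℝ] H} (hT : ∀ x, 0 ≤ ⟪T x, x⟫) (W : Submodule ℝ H) :
    0 ≤ mW T W :=
  Real.iSup_nonneg fun x => rq_nonneg hT x.1

lemma rq_le_mW (T : H →L[ℝ] H) {W : Submodule ℝ H} {x : H} (hx : x ∈ W) (hx0 : x ≠ 0) :
    rq T x ≤ mW T W :=
  le_ciSup (bddAbove_rq T W) ⟨x, hx, hx0⟩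

lemma inner_le_mW {T : H →L[ℝ] H} (hT : ∀ x, 0 ≤ ⟪T x, x⟫) {W : Submodule ℝ H} {x : H}
    (hx : x ∈ W) : ⟪T x, x⟫ ≤ mW T W * ⟪x, x⟫ := by
  rcases eq_or_ne x 0 with rfl | hx0
  · simp
  · have hpos : (0:ℝ) < ⟪x, x⟫ := inner_self_pos' hx0
    have := rq_le_mW T hx hx0
    rw [rq, div_le_iff₀ hpos] at this
    linarith

lemma mW_mono {T : H →L[ℝ] H} (hT : ∀ x, 0 ≤ ⟪T x, x⟫) {W W' : Submodule ℝ H}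
    (h : W' ≤ W) : mW T W' ≤ mW T W := by
  refine Real.iSup_le (fun x => ?_) (mW_nonneg hT W)
  exact le_ciSup (bddAbove_rq T W) ⟨x.1, h x.2.1, x.2.2⟩

variable [CompleteSpace H]

/-- Cauchy–Schwarz for the positive form of a positive self-adjoint operator. -/
lemma cs_pos {B : H →L[ℝ] H} (hBsa : IsSelfAdjoint B) (hBpos : ∀ x, 0 ≤ ⟪B x, x⟫)
    (u v : H) : ⟪B u, v⟫ ^ 2 ≤ ⟪B u, u⟫ * ⟪B v, v⟫ := by
  have hsymm := hBsa.isSymmetric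
  have key : ∀ t : ℝ, 0 ≤ ⟪B v, v⟫ * (t * t) + (2 * ⟪B u, v⟫) * t + ⟪B u, u⟫ := by
    intro t
    have h0 := hBpos (u + t • v)
    have hexp : ⟪B (u + t • v), u + t • v⟫
        = ⟪B u, u⟫ + t * ⟪B u, v⟫ + t * ⟪B v, u⟫ + t * t * ⟪B v, v⟫ := by
      rw [map_add, map_smul, inner_add_left, inner_add_right, inner_add_right,
        inner_smul_left, real_inner_smul_right, real_inner_smul_right, inner_smul_left]
      simp only [starRingEnd_apply, star_trivial]
      ring
    have hcomm : ⟪B v, u⟫ = ⟪B u, v⟫ := by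
      rw [real_inner_comm]
      exact (hsymm u v).symm
    rw [hexp, hcomm] at h0
    linarith
  have := discrim_le_zero key
  rw [discrim] at this
  nlinarith

/-- Existence of a top eigenvector on a closed invariant subspace. -/
lemma exists_eigen {B : H →L[ℝ] H} (hBc : IsCompactOperator B) (hBsa : IsSelfAdjoint B)
    (hBpos : ∀ x, 0 ≤ ⟪B x, x⟫) (W : Submodule ℝ H) (hWc : IsClosed (W : Set H))
    (hWinv : ∀ x ∈ W, B x ∈ W) (hWne : ∃ x, x ∈ W ∧ x ≠ 0) :
    ∃ e, e ∈ W ∧ ‖e‖ = 1 ∧ B e = mW B W • e := by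
  haveI : Nonempty {x : H // x ∈ W ∧ x ≠ 0} := ⟨⟨hWne.choose, hWne.choose_spec⟩⟩
  set m := mW B W with hm
  have hm0 : 0 ≤ m := mW_nonneg hBpos W
  have hq : ∀ x ∈ W, ⟪B x, x⟫ ≤ m * ⟪x, x⟫ := fun x hx => inner_le_mW hBpos hx
  have hBx_sq : ∀ x ∈ W, ‖B x‖ ^ 2 ≤ m * ⟪B x, x⟫ := by
    intro x hx
    rcases eq_or_ne (B x) 0 with h0 | h0
    · rw [h0]
      simpa using mul_nonneg hm0 (hBpos x)
    · have h1 : ⟪B x, B x⟫ ^ 2 ≤ ⟪B x, x⟫ * ⟪B (B x), B x⟫ := by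
        have := cs_pos hBsa hBpos x (B x)
        nlinarith [real_inner_self_nonneg (x := B x), hBpos x]
      have h2 : ⟪B (B x), B x⟫ ≤ m * ⟪B x, B x⟫ := hq _ (hWinv x hx)
      have h3 : ⟪B x, B x⟫ = ‖B x‖ ^ 2 := real_inner_self_eq_norm_sq (B x)
      have h4 : (0:ℝ) < ⟪B x, B x⟫ := inner_self_pos' h0
      nlinarith [hBpos x]
  rcases eq_or_lt_of_le hm0 with hmz | hmpos
  · obtain ⟨x0, hx0W, hx00⟩ := hWne
    refine ⟨‖x0‖⁻¹ • x0, W.smul_mem _ hx0W, norm_smul_inv_norm hx00, ?_⟩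
    set e := ‖x0‖⁻¹ • x0 with he
    have heW : e ∈ W := W.smul_mem _ hx0W
    have h1 : ‖B e‖ ^ 2 ≤ m * ⟪B e, e⟫ := hBx_sq e heW
    have h2 : B e = 0 := by
      rw [← hmz] at h1
      simp only [zero_mul] at h1
      have := sq_nonneg ‖B e‖
      have : ‖B e‖ = 0 := by nlinarith
      exact norm_eq_zero.1 this
    rw [h2, ← hmz, zero_smul]
  · -- m > 0 case
    have hseq : ∀ k : ℕ, ∃ x, x ∈ W ∧ ‖x‖ = 1 ∧ m - 1 / (k + 1) < ⟪B x, x⟫ := by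
      intro k
      have hlt : m - 1 / ((k : ℝ) + 1) < m := by
        have : (0:ℝ) < 1 / ((k : ℝ) + 1) := by positivity
        linarith
      obtain ⟨y, hy⟩ := exists_lt_of_lt_ciSup (hm ▸ hlt : m - 1 / ((k : ℝ) + 1) < mW B W)
      refine ⟨‖y.1‖⁻¹ • y.1, W.smul_mem _ y.2.1, norm_smul_inv_norm y.2.2, ?_⟩
      rwa [rq_smul B y.1 y.2.2]
    choose u hu1 hu2 hu3 using hseq
    have huin : ∀ k, ⟪u k, u k⟫ = 1 := by
      intro k
      rw [real_inner_self_eq_norm_sq, hu2 k, one_pow]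
    have hle : ∀ k, ⟪B (u k), u k⟫ ≤ m := by
      intro k
      have := hq (u k) (hu1 k)
      rwa [huin k, mul_one] at this
    have htend : Tendsto (fun k : ℕ => ⟪B (u k), u k⟫) atTop (nhds m) := by
      have hlow : Tendsto (fun k : ℕ => m - 1 / ((k : ℝ) + 1)) atTop (nhds m) := by
        have : Tendsto (fun k : ℕ => 1 / ((k : ℝ) + 1)) atTop (nhds 0) :=
          tendsto_one_div_add_atTop_nhds_zero_nat
        have := tendsto_const_nhds (x := m) (f := atTop (α := ℕ)) |>.sub this
        simpa using this
      exact tendsto_of_tendsto_of_tendsto_of_le_of_le hlow tendsto_const_nhds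
        (fun k => (hu3 k).le) fun k => hle k
    have hdiff : Tendsto (fun k : ℕ => B (u k) - m • u k) atTop (nhds 0) := by
      have hsq : ∀ k, ‖B (u k) - m • u k‖ ^ 2 ≤ m * (m - ⟪B (u k), u k⟫) := by
        intro k
        have hexp : ‖B (u k) - m • u k‖ ^ 2
            = ‖B (u k)‖ ^ 2 - 2 * (m * ⟪B (u k), u k⟫) + m ^ 2 := by
          have hnorm : ‖m • u k‖ ^ 2 = m ^ 2 := by
            rw [norm_smul, hu2 k, mul_one, Real.norm_eq_abs, sq_abs]
          rw [norm_sub_sq_real, real_inner_smul_right, hnorm]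
        have h1 : ‖B (u k)‖ ^ 2 ≤ m * ⟪B (u k), u k⟫ := hBx_sq _ (hu1 k)
        rw [hexp]
        nlinarith
      have hsq0 : Tendsto (fun k : ℕ => ‖B (u k) - m • u k‖ ^ 2) atTop (nhds 0) := by
        have hupper : Tendsto (fun k : ℕ => m * (m - ⟪B (u k), u k⟫)) atTop (nhds 0) := by
          have := (tendsto_const_nhds (x := m) (f := atTop (α := ℕ))).sub htend
          have := (tendsto_const_nhds (x := m) (f := atTop (α := ℕ))).mul this
          simpa using this
        exact tendsto_of_tendsto_of_tendsto_of_le_of_le tendsto_const_nhds hupper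
          (fun k => sq_nonneg _) hsq
      rw [tendsto_zero_iff_norm_tendsto_zero]
      have h := (Real.continuous_sqrt.tendsto 0).comp hsq0
      simp only [Real.sqrt_zero] at h
      exact h.congr fun k => by
        simp [Function.comp_def, Real.sqrt_sq (norm_nonneg _)]
    obtain ⟨K, hK, hKsub⟩ :=
      hBc.image_closedBall_subset_compact (𝕜₁ := ℝ) (f := (B : H →ₗ[ℝ] H)) 1
    have hmem : ∀ k : ℕ, B (u k) ∈ K := by
      intro k
      apply hKsub
      exact ⟨u k, by simp [Metric.mem_closedBall, (hu2 k).le], rfl⟩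
    obtain ⟨y, hyK, φ, hφ, hconv⟩ := hK.tendsto_subseq hmem
    have h1 : Tendsto (fun k => B (u (φ k)) - m • u (φ k)) atTop (nhds 0) :=
      hdiff.comp hφ.tendsto_atTop
    have h2 : Tendsto (fun k => m • u (φ k)) atTop (nhds y) := by
      have := hconv.sub h1
      simpa using this
    have h3 : Tendsto (fun k => u (φ k)) atTop (nhds (m⁻¹ • y)) := by
      have := h2.const_smul m⁻¹
      simpa [smul_smul, inv_mul_cancel₀ hmpos.ne'] using this
    refine ⟨m⁻¹ • y, ?_, ?_, ?_⟩
    · exact hWc.mem_of_tendsto h3 (Filter.Eventually.of_forall fun k => hu1 (φ k))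
    · have := (continuous_norm.tendsto _).comp h3
      have h4 : Tendsto (fun k => ‖u (φ k)‖) atTop (nhds ‖m⁻¹ • y‖) := this
      have h5 : Tendsto (fun k : ℕ => (1:ℝ)) atTop (nhds 1) := tendsto_const_nhds
      have := tendsto_nhds_unique (h4.congr (fun k => hu2 (φ k))) h5
      exact this.symm ▸ this
    · have h6 : Tendsto (fun k => B (u (φ k))) atTop (nhds (B (m⁻¹ • y))) :=
        (B.continuous.tendsto _).comp h3
      have h7 : B (m⁻¹ • y) = y := tendsto_nhds_unique h6 hconv
      rw [h7, smul_smul, mul_inv_cancel₀ hmpos.ne', one_smul]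


lemma exists_S {B : H →L[ℝ] H} (hBc : IsCompactOperator B) (hBsa : IsSelfAdjoint B)
    (hBpos : ∀ x, 0 ≤ ⟪B x, x⟫) (hinf : ¬ FiniteDimensional ℝ H) (N : ℕ) :
    ∃ S : Submodule ℝ H, FiniteDimensional ℝ S ∧ finrank ℝ S = N ∧
      (∀ x ∈ S, B x ∈ S) ∧ (∀ x ∈ S, mW B Sᗮ * ⟪x, x⟫ ≤ ⟪B x, x⟫) := by
  have hsymm := hBsa.isSymmetric
  induction N with
  | zero =>
    refine ⟨⊥, inferInstance, finrank_bot ℝ H, ?_, ?_⟩ <;>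
      · intro x hx
        simp only [Submodule.mem_bot] at hx
        simp [hx]
  | succ N ih =>
    obtain ⟨S, hfd, hrk, hinv, hkey⟩ := ih
    haveI := hfd
    have hWinv : ∀ x ∈ Sᗮ, B x ∈ Sᗮ := by
      intro x hx
      rw [Submodule.mem_orthogonal]
      intro u hu
      have h1 : ⟪u, B x⟫ = ⟪B u, x⟫ := (hsymm u x).symm
      rw [h1]
      exact hx (B u) (hinv u hu)
    obtain ⟨e, heW, hen, heig⟩ := exists_eigen hBc hBsa hBpos Sᗮ
      (Submodule.isClosed_orthogonal S) hWinv (orth_exists_ne_zero hinf S)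
    set m := mW B Sᗮ with hm
    have hez : e ≠ 0 := fun h => by simp [h] at hen
    have heS : e ∉ S := by
      intro h
      have := heW e h
      rw [real_inner_self_eq_norm_sq, hen] at this
      norm_num at this
    refine ⟨S ⊔ span ℝ {e}, inferInstance, ?_, ?_, ?_⟩
    · rw [finrank_sup_span heS, hrk]
    · intro x hx
      obtain ⟨u, hu, v, hv, rfl⟩ := Submodule.mem_sup.1 hx
      obtain ⟨t, rfl⟩ := Submodule.mem_span_singleton.1 hv
      have : B (u + t • e) = B u + (t * m) • e := by
        rw [map_add, map_smul, heig, smul_smul]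
      rw [this]
      exact Submodule.add_mem _ (Submodule.mem_sup_left (hinv u hu))
        (Submodule.mem_sup_right (Submodule.smul_mem _ _ (Submodule.mem_span_singleton_self e)))
    · intro x hx
      have hmm : mW B (S ⊔ span ℝ {e})ᗮ ≤ m :=
        mW_mono hBpos (Submodule.orthogonal_le le_sup_left)
      have hxx : (0:ℝ) ≤ ⟪x, x⟫ := real_inner_self_nonneg
      refine le_trans (mul_le_mul_of_nonneg_right hmm hxx) ?_
      obtain ⟨u, hu, v, hv, rfl⟩ := Submodule.mem_sup.1 hx
      obtain ⟨t, rfl⟩ := Submodule.mem_span_singleton.1 hv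
      have hue : ⟪u, e⟫ = 0 := heW u hu
      have heu : ⟪e, u⟫ = 0 := by rw [real_inner_comm]; exact hue
      have hee : ⟪e, e⟫ = 1 := by
        rw [real_inner_self_eq_norm_sq, hen, one_pow]
      have hBue : ⟪B u, e⟫ = 0 := heW (B u) (hinv u hu)
      have hx2 : ⟪u + t • e, u + t • e⟫ = ⟪u, u⟫ + t ^ 2 := by
        simp only [real_inner_add_add_self, real_inner_smul_left, real_inner_smul_right,
          hue, hee]
        ring
      have hBx2 : ⟪B (u + t • e), u + t • e⟫ = ⟪B u, u⟫ + t ^ 2 * m := by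
        have h1 : B (u + t • e) = B u + (t * m) • e := by
          rw [map_add, map_smul, heig, smul_smul]
        rw [h1]
        simp only [inner_add_left, inner_add_right, real_inner_smul_left,
          real_inner_smul_right, hBue, heu, hee, hue]
        ring
      have hIH : m * ⟪u, u⟫ ≤ ⟪B u, u⟫ := hkey u hu
      have hm0 : 0 ≤ m := mW_nonneg hBpos _
      rw [hx2, hBx2]
      nlinarith [sq_nonneg t]

lemma key_subspace {B : H →L[ℝ] H} (hBc : IsCompactOperator B) (hBsa : IsSelfAdjoint B)
    (hBpos : ∀ x, 0 ≤ ⟪B x, x⟫) (hinf : ¬ FiniteDimensional ℝ H) (N : ℕ) (hN : 1 ≤ N) :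
    ∃ S : Submodule ℝ H, FiniteDimensional ℝ S ∧ finrank ℝ S = N ∧
      ∀ x ∈ Sᗮ, ⟪B x, x⟫ ≤ lambdaN B N * ⟪x, x⟫ := by
  obtain ⟨S, hfd, hrk, hinv, hkey⟩ := exists_S hBc hBsa hBpos hinf N
  haveI := hfd
  have hSne : ∃ x ∈ S, x ≠ 0 := by
    have : S ≠ ⊥ := by
      intro h
      rw [h, finrank_bot] at hrk
      omega
    obtain ⟨x, hx, hx0⟩ := (Submodule.ne_bot_iff S).1 this
    exact ⟨x, hx, hx0⟩
  haveI : Nonempty {x : H // x ∈ S ∧ x ≠ 0} := by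
    obtain ⟨x, hx, hx0⟩ := hSne
    exact ⟨⟨x, hx, hx0⟩⟩
  have hmlam : mW B Sᗮ ≤ lambdaN B N := by
    have h1 : mW B Sᗮ ≤ infR B S := by
      refine le_ciInf fun x => ?_
      have hpos : (0:ℝ) < ⟪x.1, x.1⟫ := inner_self_pos' x.2.2
      rw [rq, le_div_iff₀ hpos]
      exact hkey x.1 x.2.1
    have h2 : infR B S ≤ lambdaN B N := by
      rw [lambdaN_eq]
      exact le_ciSup (bddAbove_infR hBpos N) ⟨S, hrk⟩
    exact h1.trans h2
  refine ⟨S, hfd, hrk, fun x hx => ?_⟩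
  have h1 : ⟪B x, x⟫ ≤ mW B Sᗮ * ⟪x, x⟫ := inner_le_mW hBpos hx
  exact h1.trans (mul_le_mul_of_nonneg_right hmlam real_inner_self_nonneg)


lemma lambdaN_lower {A B : H →L[ℝ] H} (hApos : ∀ x, 0 ≤ ⟪A x, x⟫)
    (hBpos : ∀ x, 0 ≤ ⟪B x, x⟫) (n : ℕ) :
    lambdaN A n ≤ lambdaN (A + B) n := by
  have hABpos : ∀ x, 0 ≤ ⟪(A + B) x, x⟫ := by
    intro x
    rw [ContinuousLinearMap.add_apply, inner_add_left]
    exact add_nonneg (hApos x) (hBpos x)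
  refine lambdaN_mono_op hApos hABpos (fun x => ?_) n
  rw [ContinuousLinearMap.add_apply, inner_add_left]
  linarith [hBpos x]

lemma lambdaN_upper {A B : H →L[ℝ] H} (hApos : ∀ x, 0 ≤ ⟪A x, x⟫)
    (hBc : IsCompactOperator B) (hBsa : IsSelfAdjoint B) (hBpos : ∀ x, 0 ≤ ⟪B x, x⟫)
    (hinf : ¬ FiniteDimensional ℝ H) {ρ : ℝ} (hρ0 : 0 ≤ ρ) (hB : ∀ N : ℕ, lambdaN B N ≤ ρ ^ N)
    (n N : ℕ) (hN1 : 1 ≤ N) (hNn : N < n) :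
    lambdaN (A + B) n ≤ lambdaN A (n - N) + ρ ^ N := by
  obtain ⟨S, hfd, hrkS, hSkey⟩ := key_subspace hBc hBsa hBpos hinf N hN1
  haveI := hfd
  have hρN : (0:ℝ) ≤ ρ ^ N := pow_nonneg hρ0 N
  rw [lambdaN_eq]
  refine Real.iSup_le (fun Fp => ?_) (add_nonneg (lambdaN_nonneg hApos _) hρN)
  obtain ⟨F, hF⟩ := Fp
  haveI : FiniteDimensional ℝ F := by
    have : 0 < finrank ℝ F := hF ▸ Nat.lt_of_lt_of_le (Nat.zero_lt_of_lt hNn) (le_of_eq rfl)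
    exact FiniteDimensional.of_finrank_pos this
  -- dimension count
  set ψ : F →ₗ[ℝ] S := (orthogonalProjection S).toLinearMap.comp (Submodule.subtype F) with hψ
  have hker : LinearMap.ker ψ = Submodule.comap (Submodule.subtype F) (F ⊓ Sᗮ) := by
    ext x
    simp only [LinearMap.mem_ker, Submodule.mem_comap, Submodule.mem_inf, hψ,
      LinearMap.comp_apply, Submodule.subtype_apply, ContinuousLinearMap.coe_coe]
    constructor
    · intro h
      exact ⟨x.2, orthogonalProjection_eq_zero_iff.1 h⟩
    · intro h
      exact orthogonalProjection_eq_zero_iff.2 h.2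
  have hrkker : finrank ℝ (LinearMap.ker ψ) = finrank ℝ (F ⊓ Sᗮ : Submodule ℝ H) := by
    rw [hker]
    exact (Submodule.comapSubtypeEquivOfLe inf_le_left).finrank_eq
  have hrn : finrank ℝ (LinearMap.range ψ) + finrank ℝ (LinearMap.ker ψ) = n := by
    rw [← hF]
    exact LinearMap.finrank_range_add_finrank_ker ψ
  have hrange : finrank ℝ (LinearMap.range ψ) ≤ N := hrkS ▸ Submodule.finrank_le _
  have hdim : n - N ≤ finrank ℝ (F ⊓ Sᗮ : Submodule ℝ H) := by omega
  obtain ⟨F', hF'le, hF'fd, hF'rk⟩ :=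
    exists_finrank_le (F ⊓ Sᗮ) (n - N) (Or.inr hdim)
  have hF'ne : ∃ x, x ∈ F' ∧ x ≠ 0 := by
    have : F' ≠ ⊥ := by
      intro h
      rw [h, finrank_bot] at hF'rk
      omega
    obtain ⟨x, hx, hx0⟩ := (Submodule.ne_bot_iff F').1 this
    exact ⟨x, hx, hx0⟩
  haveI hne' : Nonempty {x : H // x ∈ F' ∧ x ≠ 0} := ⟨⟨hF'ne.choose, hF'ne.choose_spec⟩⟩
  have hABpos : ∀ x, 0 ≤ ⟪(A + B) x, x⟫ := by
    intro x
    rw [ContinuousLinearMap.add_apply, inner_add_left]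
    exact add_nonneg (hApos x) (hBpos x)
  -- step 1 : infR (A+B) F ≤ rq A x + ρ^N for all x in F'
  have hstep : ∀ x : {x : H // x ∈ F' ∧ x ≠ 0}, infR (A + B) F ≤ rq A x.1 + ρ ^ N := by
    intro x
    have hxF : x.1 ∈ F := (hF'le.trans inf_le_left) x.2.1
    have hxS : x.1 ∈ Sᗮ := (hF'le.trans inf_le_right) x.2.1
    have h1 : infR (A + B) F ≤ rq (A + B) x.1 :=
      ciInf_le (bddBelow_rq hABpos F) ⟨x.1, hxF, x.2.2⟩
    have hpos : (0:ℝ) < ⟪x.1, x.1⟫ := inner_self_pos' x.2.2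
    have h2 : rq (A + B) x.1 = rq A x.1 + rq B x.1 := by
      rw [rq, rq, rq, ContinuousLinearMap.add_apply, inner_add_left, add_div]
    have h3 : rq B x.1 ≤ ρ ^ N := by
      have := hSkey x.1 hxS
      rw [rq, div_le_iff₀ hpos]
      calc ⟪B x.1, x.1⟫ ≤ lambdaN B N * ⟪x.1, x.1⟫ := this
        _ ≤ ρ ^ N * ⟪x.1, x.1⟫ := mul_le_mul_of_nonneg_right (hB N) hpos.le
    linarith [h1, h2 ▸ h1]
  -- step 2 : infR (A+B) F ≤ infR A F' + ρ^N
  have hstep2 : infR (A + B) F ≤ infR A F' + ρ ^ N := by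
    have : infR (A + B) F - ρ ^ N ≤ infR A F' := by
      refine le_ciInf fun x => ?_
      linarith [hstep x]
    linarith
  have hstep3 : infR A F' ≤ lambdaN A (n - N) := by
    rw [lambdaN_eq]
    exact le_ciSup (bddAbove_infR hApos (n - N)) ⟨F', hF'rk⟩
  calc infR (A + B) F ≤ infR A F' + ρ ^ N := hstep2
    _ ≤ lambdaN A (n - N) + ρ ^ N := by linarith


section Limits

lemma tendsto_nat_sqrt_atTop : Tendsto (fun n : ℕ => Nat.sqrt n) atTop atTop := by
  refine Filter.tendsto_atTop_atTop.2 fun b => ⟨b * b, fun n hn => Nat.le_sqrt.2 hn⟩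

lemma tendsto_sub_sqrt_atTop : Tendsto (fun n : ℕ => n - Nat.sqrt n) atTop atTop := by
  refine Filter.tendsto_atTop_atTop.2 fun b => ⟨max 4 (2 * b), fun n hn => ?_⟩
  have h4 : 4 ≤ n := le_trans (le_max_left _ _) hn
  have hb : 2 * b ≤ n := le_trans (le_max_right _ _) hn
  have h2 : 2 ≤ Nat.sqrt n := Nat.le_sqrt.2 (by omega)
  have hsq : Nat.sqrt n * Nat.sqrt n ≤ n := Nat.sqrt_le n
  have : 2 * Nat.sqrt n ≤ n := le_trans (Nat.mul_le_mul_right _ h2) hsq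
  omega

lemma tendsto_sqrt_div_zero : Tendsto (fun n : ℕ => (Nat.sqrt n : ℝ) / (n : ℝ)) atTop (nhds 0) := by
  have hup : Tendsto (fun n : ℕ => ((Nat.sqrt n : ℝ))⁻¹) atTop (nhds 0) := by
    have h1 : Tendsto (fun n : ℕ => ((Nat.sqrt n : ℕ) : ℝ)) atTop atTop :=
      tendsto_natCast_atTop_atTop.comp tendsto_nat_sqrt_atTop
    exact h1.inv_tendsto_atTop
  refine tendsto_of_tendsto_of_tendsto_of_le_of_le' tendsto_const_nhds hup ?_ ?_
  · filter_upwards [eventually_ge_atTop 1] with n hn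
    positivity
  · filter_upwards [eventually_ge_atTop 1] with n hn
    have h1 : 1 ≤ Nat.sqrt n := Nat.le_sqrt.2 (by omega)
    have h1' : (1:ℝ) ≤ (Nat.sqrt n : ℝ) := by exact_mod_cast h1
    have hsq : ((Nat.sqrt n : ℝ)) * (Nat.sqrt n : ℝ) ≤ (n : ℝ) := by
      exact_mod_cast Nat.sqrt_le n
    have hn0 : (0:ℝ) < (n:ℝ) := by exact_mod_cast Nat.lt_of_lt_of_le Nat.zero_lt_one hn
    have hspos : (0:ℝ) < (Nat.sqrt n : ℝ) := by linarith
    rw [div_le_iff₀ hn0]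
    calc (Nat.sqrt n : ℝ) = (Nat.sqrt n : ℝ)⁻¹ * ((Nat.sqrt n : ℝ) * (Nat.sqrt n : ℝ)) := by
          field_simp
      _ ≤ (Nat.sqrt n : ℝ)⁻¹ * (n : ℝ) :=
          mul_le_mul_of_nonneg_left hsq (by positivity)

lemma tendsto_geom_mul_pow {ρ : ℝ} (hρ0 : 0 ≤ ρ) (hρ1 : ρ < 1) (M : ℕ) :
    Tendsto (fun k : ℕ => ((k : ℝ) + 1) ^ M * ρ ^ k) atTop (nhds 0) := by
  rcases eq_or_lt_of_le hρ0 with rfl | hρpos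
  · refine tendsto_const_nhds.congr' ?_
    filter_upwards [eventually_ge_atTop 1] with k hk
    rw [zero_pow (by omega), mul_zero]
  · have h := tendsto_pow_const_mul_const_pow_of_lt_one M hρ0 hρ1
    have h2 := h.comp (tendsto_add_atTop_nat 1)
    have h3 := h2.const_mul ρ⁻¹
    rw [mul_zero] at h3
    refine h3.congr fun k => ?_
    simp only [Function.comp_apply]
    push_cast
    rw [pow_succ]
    field_simp

lemma tendsto_geom_pow_rpow {ρ s : ℝ} (hρ0 : 0 ≤ ρ) (hρ1 : ρ < 1) (hs : 0 < s) :
    Tendsto (fun n : ℕ => ρ ^ Nat.sqrt n * (n : ℝ) ^ s) atTop (nhds 0) := by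
  set M := ⌈2 * s⌉₊ with hM
  have hbound : ∀ n : ℕ, ρ ^ Nat.sqrt n * (n : ℝ) ^ s
      ≤ ((Nat.sqrt n : ℝ) + 1) ^ M * ρ ^ Nat.sqrt n := by
    intro n
    set k := Nat.sqrt n
    have hk1 : (1:ℝ) ≤ (k : ℝ) + 1 := by
      have : (0:ℝ) ≤ (k : ℝ) := Nat.cast_nonneg k
      linarith
    have hlt : (n : ℝ) ≤ ((k : ℝ) + 1) * ((k : ℝ) + 1) := by
      have := Nat.lt_succ_sqrt n
      have : (n : ℝ) < ((k + 1 : ℕ) : ℝ) * ((k + 1 : ℕ) : ℝ) := by exact_mod_cast this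
      push_cast at this
      linarith
    have h1 : (n : ℝ) ^ s ≤ (((k : ℝ) + 1) * ((k : ℝ) + 1)) ^ s :=
      Real.rpow_le_rpow (Nat.cast_nonneg n) hlt hs.le
    have h2 : (((k : ℝ) + 1) * ((k : ℝ) + 1)) ^ s = ((k : ℝ) + 1) ^ (2 * s) := by
      rw [Real.rpow_mul (by positivity), Real.rpow_two]
      ring_nf
    have h3 : ((k : ℝ) + 1) ^ (2 * s) ≤ ((k : ℝ) + 1) ^ (M : ℝ) :=
      Real.rpow_le_rpow_of_exponent_le hk1 (Nat.le_ceil _)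
    have h4 : ((k : ℝ) + 1) ^ (M : ℝ) = ((k : ℝ) + 1) ^ M := Real.rpow_natCast _ M
    have h5 : (n : ℝ) ^ s ≤ ((k : ℝ) + 1) ^ M := by
      rw [← h4]
      exact h1.trans (h2 ▸ h3)
    have hρk : (0:ℝ) ≤ ρ ^ k := pow_nonneg hρ0 k
    calc ρ ^ k * (n : ℝ) ^ s ≤ ρ ^ k * (((k : ℝ) + 1) ^ M) :=
          mul_le_mul_of_nonneg_left h5 hρk
      _ = ((k : ℝ) + 1) ^ M * ρ ^ k := mul_comm _ _
  have hupper : Tendsto (fun n : ℕ => ((Nat.sqrt n : ℝ) + 1) ^ M * ρ ^ Nat.sqrt n)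
      atTop (nhds 0) :=
    (tendsto_geom_mul_pow hρ0 hρ1 M).comp tendsto_nat_sqrt_atTop
  refine tendsto_of_tendsto_of_tendsto_of_le_of_le tendsto_const_nhds hupper ?_ hbound
  intro n
  have : (0:ℝ) ≤ (n:ℝ) ^ s := Real.rpow_nonneg (Nat.cast_nonneg n) s
  positivity

end Limits

end Stmt15

theorem stmt_15 {H : Type*} [NormedAddCommGroup H] [InnerProductSpace ℝ H] [CompleteSpace H]
    (A B : H →L[ℝ] H) (hAc : IsCompactOperator A) (hBc : IsCompactOperator B)
    (hAsa : IsSelfAdjoint A) (hBsa : IsSelfAdjoint B)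
    (hApos : ∀ x : H, 0 ≤ ⟪A x, x⟫) (hBpos : ∀ x : H, 0 ≤ ⟪B x, x⟫)
    (c s ρ : ℝ) (hc : 0 < c) (hs : 0 < s) (hρ0 : 0 ≤ ρ) (hρ1 : ρ < 1)
    (hA : Tendsto (fun n : ℕ => lambdaN A n / (c * (n : ℝ) ^ (-s))) atTop (nhds 1))
    (hB : ∀ N : ℕ, lambdaN B N ≤ ρ ^ N) :
    Tendsto (fun n : ℕ => lambdaN (A + B) n / (c * (n : ℝ) ^ (-s))) atTop (nhds 1) := by
  classical
  by_cases hfin : FiniteDimensional ℝ H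
  · exfalso
    have hev : ∀ᶠ n : ℕ in atTop, lambdaN A n / (c * (n : ℝ) ^ (-s)) = 0 := by
      filter_upwards [eventually_gt_atTop (Module.finrank ℝ H)] with n hn
      haveI : IsEmpty {F : Submodule ℝ H // Module.finrank ℝ F = n} := by
        constructor
        rintro ⟨F, hF⟩
        have := Submodule.finrank_le F
        omega
      rw [Stmt15.lambdaN_eq, Real.iSup_of_isEmpty, zero_div]
    have h0 : Tendsto (fun n : ℕ => lambdaN A n / (c * (n : ℝ) ^ (-s))) atTop (nhds 0) :=
      Tendsto.congr' (by filter_upwards [hev] with n h using h.symm) tendsto_const_nhds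
    exact one_ne_zero (tendsto_nhds_unique hA h0)
  · have hABpos : ∀ x : H, 0 ≤ ⟪(A + B) x, x⟫ := by
      intro x
      rw [ContinuousLinearMap.add_apply, inner_add_left]
      exact add_nonneg (hApos x) (hBpos x)
    set g : ℕ → ℝ := fun n => c * (n : ℝ) ^ (-s) with hg
    have hgpos : ∀ n : ℕ, 1 ≤ n → 0 < g n := by
      intro n hn
      have hn0 : (0:ℝ) < (n : ℝ) := by exact_mod_cast hn
      exact mul_pos hc (Real.rpow_pos_of_pos hn0 _)
    have hlow : ∀ᶠ n : ℕ in atTop, lambdaN A n / g n ≤ lambdaN (A + B) n / g n := by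
      filter_upwards [eventually_ge_atTop 1] with n hn
      have hgn := hgpos n hn
      gcongr
      exact Stmt15.lambdaN_lower hApos hBpos n
    set u : ℕ → ℝ := fun n =>
      lambdaN A (n - Nat.sqrt n) / g (n - Nat.sqrt n)
        * (((n - Nat.sqrt n : ℕ) : ℝ) / (n : ℝ)) ^ (-s)
        + ρ ^ Nat.sqrt n * (n : ℝ) ^ s / c with hu
    have hut : Tendsto u atTop (nhds 1) := by
      have h1 : Tendsto (fun n : ℕ => lambdaN A (n - Nat.sqrt n) / g (n - Nat.sqrt n))
          atTop (nhds 1) := hA.comp Stmt15.tendsto_sub_sqrt_atTop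
      have hb : Tendsto (fun n : ℕ => ((n - Nat.sqrt n : ℕ) : ℝ) / (n : ℝ)) atTop (nhds 1) := by
        have h2 := Stmt15.tendsto_sqrt_div_zero
        have h3 : Tendsto (fun n : ℕ => 1 - (Nat.sqrt n : ℝ) / (n : ℝ)) atTop (nhds 1) := by
          have := (tendsto_const_nhds (x := (1:ℝ)) (f := atTop (α := ℕ))).sub h2
          simpa using this
        refine h3.congr' ?_
        filter_upwards [eventually_ge_atTop 1] with n hn
        have hn0 : (0:ℝ) < (n : ℝ) := by exact_mod_cast hn
        rw [Nat.cast_sub (Nat.sqrt_le_self n)]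
        field_simp
      have h4 : Tendsto (fun n : ℕ => (((n - Nat.sqrt n : ℕ) : ℝ) / (n : ℝ)) ^ (-s))
          atTop (nhds 1) := by
        have := hb.rpow_const (p := -s) (Or.inl one_ne_zero)
        simpa [Real.one_rpow] using this
      have h5 : Tendsto (fun n : ℕ => ρ ^ Nat.sqrt n * (n : ℝ) ^ s / c) atTop (nhds 0) := by
        have := (Stmt15.tendsto_geom_pow_rpow hρ0 hρ1 hs).div_const c
        simpa using this
      have := (h1.mul h4).add h5
      simpa using this
    have hup : ∀ᶠ n : ℕ in atTop, lambdaN (A + B) n / g n ≤ u n := by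
      filter_upwards [eventually_ge_atTop 4] with n hn
      set k := Nat.sqrt n with hk
      have hk1 : 1 ≤ k := Nat.le_sqrt.2 (by omega)
      have hkn : k < n := Nat.sqrt_lt_self (by omega)
      have hm1 : 1 ≤ n - k := by omega
      have hineq := Stmt15.lambdaN_upper hApos hBc hBsa hBpos hfin hρ0 hB n k hk1 hkn
      have hgn : 0 < g n := hgpos n (by omega)
      have hgm : 0 < g (n - k) := hgpos _ hm1
      have hdiv : lambdaN (A + B) n / g n ≤ (lambdaN A (n - k) + ρ ^ k) / g n := by
        gcongr
      rw [add_div] at hdiv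
      refine hdiv.trans (le_of_eq ?_)
      have hmpos : (0:ℝ) < ((n - k : ℕ) : ℝ) := by exact_mod_cast hm1
      have hnpos : (0:ℝ) < (n : ℝ) := by
        have : (1:ℕ) ≤ n := by omega
        exact_mod_cast Nat.lt_of_lt_of_le Nat.zero_lt_one this
      have hcm : (0:ℝ) < ((n - k : ℕ) : ℝ) ^ (-s) := Real.rpow_pos_of_pos hmpos _
      have hcn : (0:ℝ) < ((n : ℕ) : ℝ) ^ (-s) := Real.rpow_pos_of_pos hnpos _
      have hns : (0:ℝ) < (n : ℝ) ^ s := Real.rpow_pos_of_pos hnpos _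
      have e1 : lambdaN A (n - k) / g n
          = lambdaN A (n - k) / g (n - k) * (((n - k : ℕ) : ℝ) / (n : ℝ)) ^ (-s) := by
        simp only [hg]
        rw [Real.div_rpow hmpos.le hnpos.le]
        field_simp
      have e2 : ρ ^ k / g n = ρ ^ k * (n : ℝ) ^ s / c := by
        simp only [hg]
        rw [Real.rpow_neg hnpos.le]
        field_simp
      rw [e1, e2, hu]
    exact tendsto_of_tendsto_of_tendsto_of_le_of_le' hA hut hlow hup
end

section
/- Let (λₙ)_{n≥1} and (ψₙ)_{n≥1} be sequences of positive reals with ∑ₙ ψₙ²/λₙ² < ∞ and ∑ₙ ψₙ²/λₙ³ = ∞. Define, for λ > 0, G(λ) = ∑ₙ ψₙ²/(λₙ(D/λ + λₙ)) where D > 0 is a constant. Then G(λ) → ∑ₙ ψₙ²/λₙ² as λ → ∞, and λ·(∑ₙ ψₙ²/λₙ² − G(λ)) = D·∑ₙ ψₙ²/(λₙ²(λₙ + D/λ)) → ∞ as λ → ∞. -/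
open Filter

theorem stmt_16 (lam ψ : ℕ → ℝ) (D : ℝ) (hD : 0 < D)
    (hlam : ∀ n, 0 < lam n) (hψ : ∀ n, 0 < ψ n)
    (h2 : Summable fun n => ψ n ^ 2 / lam n ^ 2)
    (h3 : ¬ Summable fun n => ψ n ^ 2 / lam n ^ 3) :
    Tendsto (fun l : ℝ => ∑' n, ψ n ^ 2 / (lam n * (D / l + lam n))) atTop
      (nhds (∑' n, ψ n ^ 2 / lam n ^ 2)) ∧
    (∀ l : ℝ, 0 < l →
      l * ((∑' n, ψ n ^ 2 / lam n ^ 2) - ∑' n, ψ n ^ 2 / (lam n * (D / l + lam n))) =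
        D * ∑' n, ψ n ^ 2 / (lam n ^ 2 * (lam n + D / l))) ∧
    Tendsto (fun l : ℝ =>
        l * ((∑' n, ψ n ^ 2 / lam n ^ 2) - ∑' n, ψ n ^ 2 / (lam n * (D / l + lam n))))
      atTop atTop := by
  have hfle : ∀ l : ℝ, 0 < l → ∀ n,
      ψ n ^ 2 / (lam n * (D / l + lam n)) ≤ ψ n ^ 2 / lam n ^ 2 := by
    intro l hl n
    have hc : 0 < D / l := div_pos hD hl
    have h0 := hlam n
    rw [sq (lam n)]
    gcongr
    all_goals nlinarith
  have hfnn : ∀ l : ℝ, 0 < l → ∀ n, 0 ≤ ψ n ^ 2 / (lam n * (D / l + lam n)) := by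
    intro l hl n
    have h1 : 0 < lam n * (D / l + lam n) :=
      mul_pos (hlam n) (add_pos (div_pos hD hl) (hlam n))
    exact div_nonneg (by positivity) h1.le
  have hfs : ∀ l : ℝ, 0 < l →
      Summable (fun n => ψ n ^ 2 / (lam n * (D / l + lam n))) := by
    intro l hl
    exact Summable.of_nonneg_of_le (hfnn l hl) (hfle l hl) h2
  have hgle : ∀ l : ℝ, 0 < l → ∀ n,
      ψ n ^ 2 / (lam n ^ 2 * (lam n + D / l)) ≤ l / D * (ψ n ^ 2 / lam n ^ 2) := by
    intro l hl n
    have h1 : ψ n ^ 2 / (lam n ^ 2 * (lam n + D / l)) ≤ ψ n ^ 2 / (lam n ^ 2 * (D / l)) := by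
      gcongr
      · exact mul_pos (pow_pos (hlam n) 2) (div_pos hD hl)
      · nlinarith [hlam n]
    have h2' : ψ n ^ 2 / (lam n ^ 2 * (D / l)) = l / D * (ψ n ^ 2 / lam n ^ 2) := by
      field_simp
    linarith
  have hgnn : ∀ l : ℝ, 0 < l → ∀ n,
      0 ≤ ψ n ^ 2 / (lam n ^ 2 * (lam n + D / l)) := by
    intro l hl n
    have h1 : 0 < lam n ^ 2 * (lam n + D / l) :=
      mul_pos (pow_pos (hlam n) 2) (add_pos (hlam n) (div_pos hD hl))
    exact div_nonneg (by positivity) h1.le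
  have hgs : ∀ l : ℝ, 0 < l →
      Summable (fun n => ψ n ^ 2 / (lam n ^ 2 * (lam n + D / l))) := by
    intro l hl
    exact Summable.of_nonneg_of_le (hgnn l hl) (hgle l hl) (h2.mul_left (l / D))
  -- Part 2: the identity
  have key : ∀ l : ℝ, 0 < l →
      l * ((∑' n, ψ n ^ 2 / lam n ^ 2) - ∑' n, ψ n ^ 2 / (lam n * (D / l + lam n))) =
        D * ∑' n, ψ n ^ 2 / (lam n ^ 2 * (lam n + D / l)) := by
    intro l hl
    rw [← Summable.tsum_sub h2 (hfs l hl)]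
    have hterm : ∀ n, ψ n ^ 2 / lam n ^ 2 - ψ n ^ 2 / (lam n * (D / l + lam n)) =
        (D / l) * (ψ n ^ 2 / (lam n ^ 2 * (lam n + D / l))) := by
      intro n
      have hln := (hlam n).ne'
      have hl0 := hl.ne'
      have hdl : D / l + lam n ≠ 0 := (add_pos (div_pos hD hl) (hlam n)).ne'
      have hdl2 : lam n + D / l ≠ 0 := (add_pos (hlam n) (div_pos hD hl)).ne'
      rw [mul_div_assoc', div_sub_div _ _ (pow_ne_zero 2 hln) (mul_ne_zero hln hdl),
        div_eq_div_iff (mul_ne_zero (pow_ne_zero 2 hln) (mul_ne_zero hln hdl))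
          (mul_ne_zero (pow_ne_zero 2 hln) hdl2)]
      ring
    rw [tsum_congr hterm, tsum_mul_left, ← mul_assoc, mul_div_cancel₀ D hl.ne']
  refine ⟨?_, key, ?_⟩
  · -- Part 1: dominated convergence
    apply tendsto_tsum_of_dominated_convergence h2
    · intro n
      have hln : lam n ≠ 0 := (hlam n).ne'
      have : Tendsto (fun l : ℝ => lam n * (D / l + lam n)) atTop
          (nhds (lam n * lam n)) := by
        have hdl : Tendsto (fun l : ℝ => D / l) atTop (nhds 0) :=
          tendsto_const_nhds.div_atTop tendsto_id
        have := (hdl.add (tendsto_const_nhds (x := lam n))).const_mul (lam n)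
        simpa using this
      have := (tendsto_const_nhds (x := ψ n ^ 2) (f := atTop (α := ℝ))).div this
        (mul_pos (hlam n) (hlam n)).ne'
      simp only [sq] at this ⊢
      exact this
    · filter_upwards [eventually_gt_atTop (0 : ℝ)] with l hl n
      rw [Real.norm_of_nonneg (hfnn l hl n)]
      exact hfle l hl n
  · -- Part 3
    have hdiv : Tendsto (fun l : ℝ =>
        D * ∑' n, ψ n ^ 2 / (lam n ^ 2 * (lam n + D / l))) atTop atTop := by
      rw [tendsto_atTop]
      intro C
      -- partial sums of ψ²/λ³ tend to infinity
      have hnn3 : ∀ n, 0 ≤ ψ n ^ 2 / lam n ^ 3 := fun n =>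
        div_nonneg (sq_nonneg _) (pow_nonneg (hlam n).le 3)
      have hps := (not_summable_iff_tendsto_nat_atTop_of_nonneg hnn3).mp h3
      obtain ⟨N, hN⟩ := (tendsto_atTop.mp hps (C / D + 1)).exists
      -- the finite partial sum of g tends to partial sum of ψ²/λ³
      have hfin : Tendsto (fun l : ℝ =>
          ∑ n ∈ Finset.range N, ψ n ^ 2 / (lam n ^ 2 * (lam n + D / l))) atTop
          (nhds (∑ n ∈ Finset.range N, ψ n ^ 2 / lam n ^ 3)) := by
        apply tendsto_finset_sum
        intro n _
        have hln : lam n ≠ 0 := (hlam n).ne'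
        have : Tendsto (fun l : ℝ => lam n ^ 2 * (lam n + D / l)) atTop
            (nhds (lam n ^ 2 * lam n)) := by
          have hdl : Tendsto (fun l : ℝ => D / l) atTop (nhds 0) :=
            tendsto_const_nhds.div_atTop tendsto_id
          have := ((tendsto_const_nhds (x := lam n)).add hdl).const_mul (lam n ^ 2)
          simpa using this
        have := (tendsto_const_nhds (x := ψ n ^ 2) (f := atTop (α := ℝ))).div this
          (mul_pos (pow_pos (hlam n) 2) (hlam n)).ne'
        have heq : lam n ^ 2 * lam n = lam n ^ 3 := by ring
        rw [heq] at this
        exact this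
      have hev : ∀ᶠ l : ℝ in atTop,
          C / D < ∑ n ∈ Finset.range N, ψ n ^ 2 / (lam n ^ 2 * (lam n + D / l)) := by
        have hlt : C / D < ∑ n ∈ Finset.range N, ψ n ^ 2 / lam n ^ 3 := by
          calc C / D < C / D + 1 := by linarith
            _ ≤ _ := hN
        exact hfin.eventually (eventually_gt_nhds hlt)
      filter_upwards [hev, eventually_gt_atTop (0 : ℝ)] with l hCl hl
      have hsum_ge : ∑ n ∈ Finset.range N, ψ n ^ 2 / (lam n ^ 2 * (lam n + D / l)) ≤
          ∑' n, ψ n ^ 2 / (lam n ^ 2 * (lam n + D / l)) :=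
        Summable.sum_le_tsum _ (fun n _ => hgnn l hl n) (hgs l hl)
      have : C / D ≤ ∑' n, ψ n ^ 2 / (lam n ^ 2 * (lam n + D / l)) :=
        le_trans hCl.le hsum_ge
      calc C = D * (C / D) := by field_simp
        _ ≤ _ := by gcongr
    apply hdiv.congr'
    filter_upwards [eventually_gt_atTop (0 : ℝ)] with l hl
    exact (key l hl).symm
end

section
/- Let ψₙ² ≍ B·n^{−6} and λₙ ≍ A·n^{−2} (i.e., ψₙ² = B n^{−6}(1+o(1)) and λₙ = A n^{−2}(1+o(1)) with A, B > 0). Then as λ → ∞, ∑_{n≥1} ψₙ²/(λₙ²(λₙ + D/λ)) = (B/A^{5/2})·(π/2)·√(λ/D)·(1+o(1)) for any constant D > 0. -/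
open Real Filter

lemma arctan_sub_le {x y : ℝ} (hx : 0 ≤ x) (hxy : x ≤ y) :
    arctan y - arctan x ≤ (y - x) / (1 + x ^ 2) := by
  have h := integral_one_div_one_add_sq (a := x) (b := y)
  rw [← h]
  have hcont : Continuous fun t : ℝ => 1 / (1 + t ^ 2) := by
    apply Continuous.div continuous_const
    · continuity
    · intro t; positivity
  have hmono : ∀ t ∈ Set.Icc x y, 1 / (1 + t ^ 2) ≤ 1 / (1 + x ^ 2) := by
    intro t ht
    apply one_div_le_one_div_of_le (by positivity)
    nlinarith [ht.1, ht.2]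
  calc ∫ t in x..y, 1 / (1 + t ^ 2) ≤ ∫ _ in x..y, 1 / (1 + x ^ 2) := by
        apply intervalIntegral.integral_mono_on hxy (hcont.intervalIntegrable _ _)
          intervalIntegrable_const hmono
    _ = (y - x) / (1 + x ^ 2) := by
        rw [intervalIntegral.integral_const, smul_eq_mul]; ring

lemma le_arctan_sub {x y : ℝ} (hx : 0 ≤ x) (hxy : x ≤ y) :
    (y - x) / (1 + y ^ 2) ≤ arctan y - arctan x := by
  have h := integral_one_div_one_add_sq (a := x) (b := y)
  rw [← h]
  have hcont : Continuous fun t : ℝ => 1 / (1 + t ^ 2) := by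
    apply Continuous.div continuous_const
    · continuity
    · intro t; positivity
  have hmono : ∀ t ∈ Set.Icc x y, 1 / (1 + y ^ 2) ≤ 1 / (1 + t ^ 2) := by
    intro t ht
    apply one_div_le_one_div_of_le (by positivity)
    nlinarith [ht.1, ht.2, hx]
  calc (y - x) / (1 + y ^ 2) = ∫ _ in x..y, 1 / (1 + y ^ 2) := by
        rw [intervalIntegral.integral_const, smul_eq_mul]; ring
    _ ≤ ∫ t in x..y, 1 / (1 + t ^ 2) :=
        intervalIntegral.integral_mono_on hxy intervalIntegrable_const
          (hcont.intervalIntegrable _ _) hmono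

lemma summable_core {c : ℝ} (hc : 0 < c) :
    Summable (fun k : ℕ => 1 / (1 + c * ((k : ℝ) + 1) ^ 2)) := by
  have h2 : Summable (fun k : ℕ => 1 / ((k : ℝ) + 1) ^ 2) := by
    have := (summable_nat_add_iff 1).2 (summable_one_div_nat_pow.2 (le_refl 2))
    simpa using this
  apply Summable.of_nonneg_of_le (fun k => by positivity)
    (fun k => ?_) (h2.mul_left c⁻¹)
  have h1 : 1 / (1 + c * ((k:ℝ)+1)^2) ≤ 1 / (c * ((k:ℝ)+1)^2) :=
    one_div_le_one_div_of_le (by positivity) (by nlinarith [sq_nonneg ((k:ℝ)+1)])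
  calc 1 / (1 + c * ((k:ℝ)+1)^2) ≤ 1 / (c * ((k:ℝ)+1)^2) := h1
    _ = c⁻¹ * (1 / ((k:ℝ)+1)^2) := by
        rw [one_div, mul_inv]; rw [one_div]

lemma core_upper {c : ℝ} (hc : 0 < c) :
    (∑' k : ℕ, 1 / (1 + c * ((k : ℝ) + 1) ^ 2)) ≤ (π / 2) / Real.sqrt c := by
  set s := Real.sqrt c with hs
  have hs0 : 0 < s := Real.sqrt_pos.2 hc
  have hsq : s ^ 2 = c := Real.sq_sqrt hc.le
  have term : ∀ k : ℕ, 1 / (1 + c * ((k : ℝ) + 1) ^ 2) ≤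
      (arctan (s * ((k : ℝ) + 1)) - arctan (s * (k : ℝ))) / s := by
    intro k
    have h := le_arctan_sub (x := s * (k : ℝ)) (y := s * ((k : ℝ) + 1))
      (by positivity) (by nlinarith)
    rw [le_div_iff₀ hs0]
    have : (s * ((k:ℝ)+1) - s * (k:ℝ)) / (1 + (s * ((k:ℝ)+1)) ^ 2)
        = s * (1 / (1 + c * ((k:ℝ)+1)^2)) := by
      rw [mul_pow, hsq]; ring
    rw [this] at h
    linarith [h]
  apply Summable.tsum_le_of_sum_le (summable_core hc)
  intro u
  obtain ⟨N, hN⟩ := u.exists_nat_subset_range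
  calc (∑ k ∈ u, 1 / (1 + c * ((k : ℝ) + 1) ^ 2))
      ≤ ∑ k ∈ Finset.range N, 1 / (1 + c * ((k : ℝ) + 1) ^ 2) :=
        Finset.sum_le_sum_of_subset_of_nonneg hN (fun k _ _ => by positivity)
    _ ≤ ∑ k ∈ Finset.range N, (arctan (s * ((k : ℝ) + 1)) - arctan (s * (k : ℝ))) / s :=
        Finset.sum_le_sum (fun k _ => term k)
    _ = (arctan (s * N) - arctan (s * 0)) / s := by
        rw [← Finset.sum_div]
        congr 1
        have := Finset.sum_range_sub (f := fun k : ℕ => arctan (s * (k : ℝ))) N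
        simpa using this
    _ ≤ (π / 2) / s := by
        apply div_le_div_of_nonneg_right ?_ hs0.le
        have h1 := Real.arctan_lt_pi_div_two (s * N)
        have h2 : arctan (s * 0) = 0 := by simp
        linarith

lemma core_lower {c : ℝ} (hc : 0 < c) :
    (π / 2 - arctan (Real.sqrt c)) / Real.sqrt c ≤
      ∑' k : ℕ, 1 / (1 + c * ((k : ℝ) + 1) ^ 2) := by
  set s := Real.sqrt c with hs
  have hs0 : 0 < s := Real.sqrt_pos.2 hc
  have hsq : s ^ 2 = c := Real.sq_sqrt hc.le
  have term : ∀ k : ℕ, (arctan (s * ((k : ℝ) + 2)) - arctan (s * ((k : ℝ) + 1))) / s ≤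
      1 / (1 + c * ((k : ℝ) + 1) ^ 2) := by
    intro k
    have h := arctan_sub_le (x := s * ((k : ℝ) + 1)) (y := s * ((k : ℝ) + 2))
      (by positivity) (by nlinarith)
    rw [div_le_iff₀ hs0]
    have : (s * ((k:ℝ)+2) - s * ((k:ℝ)+1)) / (1 + (s * ((k:ℝ)+1)) ^ 2)
        = 1 / (1 + c * ((k:ℝ)+1)^2) * s := by
      rw [mul_pow, hsq]; ring
    rw [this] at h
    linarith [h]
  have partial_bd : ∀ N : ℕ,
      (arctan (s * ((N : ℝ) + 1)) - arctan s) / s ≤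
        ∑' k : ℕ, 1 / (1 + c * ((k : ℝ) + 1) ^ 2) := by
    intro N
    have tele : ∑ k ∈ Finset.range N, (arctan (s * ((k : ℝ) + 2)) - arctan (s * ((k : ℝ) + 1)))
        = arctan (s * ((N : ℝ) + 1)) - arctan (s * 1) := by
      have h := Finset.sum_range_sub (f := fun k : ℕ => arctan (s * ((k : ℝ) + 1))) N
      have e : ∀ k : ℕ, arctan (s * ((k : ℝ) + 2)) - arctan (s * ((k : ℝ) + 1)) =
          (fun k : ℕ => arctan (s * ((k : ℝ) + 1))) (k + 1)
            - (fun k : ℕ => arctan (s * ((k : ℝ) + 1))) k := by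
        intro k; simp only []; push_cast; ring_nf
      rw [Finset.sum_congr rfl (fun k _ => e k), h]
      norm_num
    calc (arctan (s * ((N : ℝ) + 1)) - arctan s) / s
        = ∑ k ∈ Finset.range N, (arctan (s * ((k : ℝ) + 2)) - arctan (s * ((k : ℝ) + 1))) / s := by
          rw [← Finset.sum_div, tele, mul_one]
      _ ≤ ∑ k ∈ Finset.range N, 1 / (1 + c * ((k : ℝ) + 1) ^ 2) :=
          Finset.sum_le_sum (fun k _ => term k)
      _ ≤ ∑' k : ℕ, 1 / (1 + c * ((k : ℝ) + 1) ^ 2) :=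
          Summable.sum_le_tsum _ (fun k _ => by positivity) (summable_core hc)
  have hlim : Tendsto (fun N : ℕ => (arctan (s * ((N : ℝ) + 1)) - arctan s) / s) atTop
      (nhds ((π / 2 - arctan s) / s)) := by
    apply Tendsto.div_const
    apply Tendsto.sub_const
    have h1 : Tendsto (fun N : ℕ => s * ((N : ℝ) + 1)) atTop atTop := by
      apply Filter.Tendsto.const_mul_atTop hs0
      exact tendsto_atTop_add_const_right _ _ tendsto_natCast_atTop_atTop
    exact (tendsto_nhds_of_tendsto_nhdsWithin tendsto_arctan_atTop).comp h1
  exact le_of_tendsto hlim (Filter.Eventually.of_forall partial_bd)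

lemma core_tendsto :
    Tendsto (fun c : ℝ => Real.sqrt c * ∑' k : ℕ, 1 / (1 + c * ((k : ℝ) + 1) ^ 2))
      (nhdsWithin 0 (Set.Ioi 0)) (nhds (π / 2)) := by
  apply tendsto_of_tendsto_of_tendsto_of_le_of_le'
    (g := fun c : ℝ => π / 2 - arctan (Real.sqrt c)) (h := fun _ : ℝ => π / 2)
  · have : Tendsto (fun c : ℝ => π / 2 - arctan (Real.sqrt c)) (nhds 0) (nhds (π / 2)) := by
      have harc : Tendsto (fun c : ℝ => arctan (Real.sqrt c)) (nhds 0) (nhds 0) := by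
        have := (Real.continuous_arctan.comp Real.continuous_sqrt).tendsto 0
        simpa [Function.comp_def] using this
      have := (tendsto_const_nhds (x := π / 2) (f := nhds (0:ℝ))).sub harc
      simpa using this
    exact this.mono_left nhdsWithin_le_nhds
  · exact tendsto_const_nhds
  · filter_upwards [self_mem_nhdsWithin] with c (hc : 0 < c)
    have hs0 : 0 < Real.sqrt c := Real.sqrt_pos.2 hc
    have := mul_le_mul_of_nonneg_left (core_lower hc) hs0.le
    rw [mul_div_cancel₀ _ hs0.ne'] at this
    linarith
  · filter_upwards [self_mem_nhdsWithin] with c (hc : 0 < c)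
    have hs0 : 0 < Real.sqrt c := Real.sqrt_pos.2 hc
    have := mul_le_mul_of_nonneg_left (core_upper hc) hs0.le
    rw [mul_div_cancel₀ _ hs0.ne'] at this
    linarith

lemma term_bounds {A B D l δ : ℝ} (hA : 0 < A) (hB : 0 < B) (hD : 0 < D) (hl : 0 < l)
    (hδ0 : 0 < δ) (hδ1 : δ < 1) {lamn ψn : ℝ} {n : ℕ} (hn : 1 ≤ n) (hlamn : 0 < lamn)
    (hψ : |ψn ^ 2 / (B * (n : ℝ) ^ (-6 : ℝ)) - 1| < δ)
    (hla : |lamn / (A * (n : ℝ) ^ (-2 : ℝ)) - 1| < δ) :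
    (1 - δ) / (1 + δ) ^ 3 * (B / A ^ 3 * (1 / (1 + D / (A * l) * (n : ℝ) ^ 2))) ≤
        ψn ^ 2 / (lamn ^ 2 * (lamn + D / l)) ∧
      ψn ^ 2 / (lamn ^ 2 * (lamn + D / l)) ≤
        (1 + δ) / (1 - δ) ^ 3 * (B / A ^ 3 * (1 / (1 + D / (A * l) * (n : ℝ) ^ 2))) := by
  have hn0 : (0 : ℝ) < (n : ℝ) := by exact_mod_cast hn
  have hq : (n : ℝ) ^ (-6 : ℝ) = ((n : ℝ) ^ 6)⁻¹ := by
    rw [show (-6 : ℝ) = -((6 : ℕ) : ℝ) by norm_num, Real.rpow_neg hn0.le, Real.rpow_natCast]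
  have hp : (n : ℝ) ^ (-2 : ℝ) = ((n : ℝ) ^ 2)⁻¹ := by
    rw [show (-2 : ℝ) = -((2 : ℕ) : ℝ) by norm_num, Real.rpow_neg hn0.le, Real.rpow_natCast]
  rw [hq] at hψ
  rw [hp] at hla
  set q : ℝ := ((n : ℝ) ^ 6)⁻¹ with hqdef
  set p : ℝ := ((n : ℝ) ^ 2)⁻¹ with hpdef
  have hq0 : 0 < q := by positivity
  have hp0 : 0 < p := by positivity
  have hBq : 0 < B * q := by positivity
  have hAp : 0 < A * p := by positivity
  have hDl : 0 < D / l := div_pos hD hl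
  rw [abs_lt] at hψ hla
  have hψub : ψn ^ 2 ≤ (1 + δ) * (B * q) := by
    have h := (div_lt_iff₀ hBq).mp (show ψn ^ 2 / (B * q) < 1 + δ by linarith [hψ.2])
    linarith
  have hψlb : (1 - δ) * (B * q) ≤ ψn ^ 2 := by
    have h := (lt_div_iff₀ hBq).mp (show 1 - δ < ψn ^ 2 / (B * q) by linarith [hψ.1])
    linarith
  have hlub : lamn ≤ (1 + δ) * (A * p) := by
    have h := (div_lt_iff₀ hAp).mp (show lamn / (A * p) < 1 + δ by linarith [hla.2])
    linarith
  have hllb : (1 - δ) * (A * p) ≤ lamn := by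
    have h := (lt_div_iff₀ hAp).mp (show 1 - δ < lamn / (A * p) by linarith [hla.1])
    linarith
  set E : ℝ := (A * p) ^ 2 * (A * p + D / l) with hEdef
  have hE0 : 0 < E := by positivity
  have hden0 : 0 < lamn ^ 2 * (lamn + D / l) := by positivity
  have hid : B * q / E = B / A ^ 3 * (1 / (1 + D / (A * l) * (n : ℝ) ^ 2)) := by
    rw [hEdef, hqdef, hpdef]
    have h1 : (0:ℝ) < 1 + D / (A * l) * (n : ℝ) ^ 2 := by positivity
    field_simp
  clear_value q p E
  clear hq hp hqdef hpdef
  have hden_lb : (1 - δ) ^ 3 * E ≤ lamn ^ 2 * (lamn + D / l) := by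
    have h2 : ((1 - δ) * (A * p)) ^ 2 ≤ lamn ^ 2 := by
      apply pow_le_pow_left₀ (mul_nonneg (by linarith) (by positivity)) hllb
    have h3 : (1 - δ) * (A * p + D / l) ≤ lamn + D / l := by
      have he : (1 - δ) * (A * p + D / l) = (1 - δ) * (A * p) + (1 - δ) * (D / l) := by ring
      have hd : (1 - δ) * (D / l) ≤ D / l := mul_le_of_le_one_left hDl.le (by linarith)
      linarith
    calc (1 - δ) ^ 3 * E = ((1 - δ) * (A * p)) ^ 2 * ((1 - δ) * (A * p + D / l)) := by
          rw [hEdef]; ring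
      _ ≤ lamn ^ 2 * (lamn + D / l) := by
          apply mul_le_mul h2 h3 (mul_nonneg (by linarith) (by positivity)) (sq_nonneg _)
  have hden_ub : lamn ^ 2 * (lamn + D / l) ≤ (1 + δ) ^ 3 * E := by
    have h2 : lamn ^ 2 ≤ ((1 + δ) * (A * p)) ^ 2 := by
      apply pow_le_pow_left₀ hlamn.le hlub
    have h3 : lamn + D / l ≤ (1 + δ) * (A * p + D / l) := by
      have he : (1 + δ) * (A * p + D / l) = (1 + δ) * (A * p) + (1 + δ) * (D / l) := by ring
      have hd : D / l ≤ (1 + δ) * (D / l) := le_mul_of_one_le_left hDl.le (by linarith)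
      linarith
    calc lamn ^ 2 * (lamn + D / l) ≤ ((1 + δ) * (A * p)) ^ 2 * ((1 + δ) * (A * p + D / l)) := by
          apply mul_le_mul h2 h3 (by positivity) (by positivity)
      _ = (1 + δ) ^ 3 * E := by rw [hEdef]; ring
  constructor
  · have := div_le_div₀ (sq_nonneg ψn) hψlb hden0 hden_ub
    calc (1 - δ) / (1 + δ) ^ 3 * (B / A ^ 3 * (1 / (1 + D / (A * l) * (n : ℝ) ^ 2)))
        = (1 - δ) * (B * q) / ((1 + δ) ^ 3 * E) := by
          rw [← hid, div_mul_div_comm]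
      _ ≤ ψn ^ 2 / (lamn ^ 2 * (lamn + D / l)) := this
  · have := div_le_div₀ (by positivity : (0:ℝ) ≤ (1 + δ) * (B * q)) hψub
      (mul_pos (pow_pos (by linarith) 3) hE0) hden_lb
    calc ψn ^ 2 / (lamn ^ 2 * (lamn + D / l)) ≤ (1 + δ) * (B * q) / ((1 - δ) ^ 3 * E) := this
      _ = (1 + δ) / (1 - δ) ^ 3 * (B / A ^ 3 * (1 / (1 + D / (A * l) * (n : ℝ) ^ 2))) := by
          rw [← hid, div_mul_div_comm]

lemma tendsto_one_of_abs {f : ℝ → ℝ} (h : ∀ ε : ℝ, 0 < ε → ∀ᶠ l in atTop, |f l - 1| ≤ ε) :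
    Tendsto f atTop (nhds 1) := by
  rw [Metric.tendsto_nhds]
  intro ε hε
  filter_upwards [h (ε / 2) (by linarith)] with l hl
  rw [Real.dist_eq]
  linarith

lemma ratio_tendsto (A B D : ℝ) (hA : 0 < A) (hB : 0 < B) (hD : 0 < D) :
    Tendsto (fun l : ℝ => (B / A ^ 3 * ∑' k : ℕ, 1 / (1 + D / (A * l) * ((k : ℝ) + 1) ^ 2)) /
      (B / A ^ ((5 : ℝ) / 2) * (π / 2) * Real.sqrt (l / D))) atTop (nhds 1) := by
  have hπ : (0:ℝ) < π / 2 := by positivity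
  have hc : Tendsto (fun l : ℝ => D / (A * l)) atTop (nhdsWithin 0 (Set.Ioi 0)) := by
    rw [tendsto_nhdsWithin_iff]
    constructor
    · have he : (fun l : ℝ => D / (A * l)) = fun l : ℝ => (D / A) * l⁻¹ := by
        funext l
        simp [div_eq_mul_inv, mul_inv]
        ring
      rw [he]
      simpa using (tendsto_inv_atTop_zero (𝕜 := ℝ)).const_mul (D / A)
    · filter_upwards [eventually_gt_atTop (0:ℝ)] with l hl
      exact div_pos hD (by positivity)
  have hg : Tendsto (fun l : ℝ => Real.sqrt (D / (A * l)) *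
      ∑' k : ℕ, 1 / (1 + D / (A * l) * ((k : ℝ) + 1) ^ 2)) atTop (nhds (π / 2)) :=
    core_tendsto.comp hc
  have hdiv := hg.div_const (π / 2)
  rw [div_self hπ.ne'] at hdiv
  apply hdiv.congr'
  filter_upwards [eventually_gt_atTop (0:ℝ)] with l hl
  set S : ℝ := ∑' k : ℕ, 1 / (1 + D / (A * l) * ((k : ℝ) + 1) ^ 2) with hS
  have hA52 : 0 < A ^ ((5:ℝ)/2) := Real.rpow_pos_of_pos hA _
  have hsA : 0 < Real.sqrt A := Real.sqrt_pos.2 hA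
  have hslD : 0 < Real.sqrt (l / D) := Real.sqrt_pos.2 (div_pos hl hD)
  have h52 : A ^ ((5:ℝ)/2) * Real.sqrt A = A ^ 3 := by
    rw [Real.sqrt_eq_rpow, ← Real.rpow_add hA, show (5:ℝ)/2 + 1/2 = ((3:ℕ):ℝ) by norm_num,
      Real.rpow_natCast]
  have hsqrt : Real.sqrt (l / D) * Real.sqrt (D / (A * l)) = (Real.sqrt A)⁻¹ := by
    rw [← Real.sqrt_mul (by positivity), show l / D * (D / (A * l)) = A⁻¹ by field_simp,
      Real.sqrt_inv]
  have hconst : B / A ^ ((5:ℝ)/2) * (π / 2) * Real.sqrt (l / D) * Real.sqrt (D / (A * l))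
      = B / A ^ 3 * (π / 2) := by
    calc B / A ^ ((5:ℝ)/2) * (π / 2) * Real.sqrt (l / D) * Real.sqrt (D / (A * l))
        = B / A ^ ((5:ℝ)/2) * (π / 2) * (Real.sqrt (l / D) * Real.sqrt (D / (A * l))) := by ring
      _ = B / A ^ ((5:ℝ)/2) * (π / 2) * (Real.sqrt A)⁻¹ := by rw [hsqrt]
      _ = B / A ^ 3 * (π / 2) := by
          rw [← h52]
          field_simp
  have hKpos : 0 < B / A ^ ((5:ℝ)/2) * (π / 2) * Real.sqrt (l / D) :=
    mul_pos (mul_pos (div_pos hB hA52) hπ) hslD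
  rw [eq_div_iff hKpos.ne', div_mul_eq_mul_div, div_eq_iff hπ.ne']
  linear_combination S * hconst

lemma K_atTop (A B D : ℝ) (hA : 0 < A) (hB : 0 < B) (hD : 0 < D) :
    Tendsto (fun l : ℝ => B / A ^ ((5 : ℝ) / 2) * (π / 2) * Real.sqrt (l / D)) atTop atTop := by
  have hsqrt : Tendsto Real.sqrt atTop atTop := by
    apply tendsto_atTop_atTop.2
    intro b
    refine ⟨(max b 0) ^ 2, fun a ha => ?_⟩
    calc b ≤ max b 0 := le_max_left _ _
      _ = Real.sqrt ((max b 0) ^ 2) := (Real.sqrt_sq (le_max_right _ _)).symm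
      _ ≤ Real.sqrt a := Real.sqrt_le_sqrt ha
  have hld : Tendsto (fun l : ℝ => l / D) atTop atTop := tendsto_id.atTop_div_const hD
  have hC : 0 < B / A ^ ((5 : ℝ) / 2) * (π / 2) :=
    mul_pos (div_pos hB (Real.rpow_pos_of_pos hA _)) (by positivity)
  exact (hsqrt.comp hld).const_mul_atTop hC

set_option maxHeartbeats 2000000 in
theorem stmt_19 (A B D : ℝ) (hA : 0 < A) (hB : 0 < B) (hD : 0 < D)
    (lam ψ : ℕ → ℝ) (hlam : ∀ n, 0 < lam n)
    (hψa : Tendsto (fun n : ℕ => ψ n ^ 2 / (B * (n : ℝ) ^ (-6 : ℝ))) atTop (nhds 1))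
    (hla : Tendsto (fun n : ℕ => lam n / (A * (n : ℝ) ^ (-2 : ℝ))) atTop (nhds 1)) :
    Tendsto (fun l : ℝ =>
        (∑' n : ℕ+, ψ (n : ℕ) ^ 2 / (lam (n : ℕ) ^ 2 * (lam (n : ℕ) + D / l))) /
          (B / A ^ ((5 : ℝ) / 2) * (π / 2) * Real.sqrt (l / D)))
      atTop (nhds 1) := by
  have hA3 : (0:ℝ) < A ^ 3 := by positivity
  have hKinv : Tendsto (fun l : ℝ => (B / A ^ ((5 : ℝ) / 2) * (π / 2) * Real.sqrt (l / D))⁻¹)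
      atTop (nhds 0) := (K_atTop A B D hA hB hD).inv_tendsto_atTop
  apply tendsto_one_of_abs
  intro ε hε
  set ε' := min ε 1 with hε'def
  have hε'0 : 0 < ε' := lt_min hε one_pos
  have hε'1 : ε' ≤ 1 := min_le_right _ _
  have hε'ε : ε' ≤ ε := min_le_left _ _
  set δ := ε' / 16 with hδdef
  have hδ0 : 0 < δ := by positivity
  have hδs : δ ≤ 1 / 16 := by rw [hδdef]; linarith
  have hδ1 : δ < 1 := by linarith
  have hee : ε' = 16 * δ := by rw [hδdef]; ring
  clear_value ε' δ
  obtain ⟨N₁, hN₁⟩ := Metric.tendsto_atTop.mp hψa δ hδ0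
  obtain ⟨N₂, hN₂⟩ := Metric.tendsto_atTop.mp hla δ hδ0
  set M := max (max N₁ N₂) 1 with hMdef
  have hM1 : N₁ ≤ M := le_trans (le_max_left _ _) (le_max_left _ _)
  have hM2 : N₂ ≤ M := le_trans (le_max_right _ _) (le_max_left _ _)
  clear_value M
  set θp := (1 + δ) / (1 - δ) ^ 3 with hθpdef
  set θm := (1 - δ) / (1 + δ) ^ 3 with hθmdef
  have h1δ3 : (0:ℝ) < (1 - δ) ^ 3 := pow_pos (by linarith) 3
  have h1δ3' : (0:ℝ) < (1 + δ) ^ 3 := pow_pos (by linarith) 3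
  have p2 : δ * δ ≤ δ * (1 / 16) := mul_le_mul_of_nonneg_left hδs hδ0.le
  have p3 : (0:ℝ) ≤ δ * δ * δ := by positivity
  have p4 : δ * δ * δ * δ ≤ δ * δ * δ * (1 / 16) :=
    mul_le_mul_of_nonneg_left hδs (by positivity)
  have hθp_le : θp ≤ 1 + ε' / 2 := by
    rw [hθpdef, div_le_iff₀ h1δ3, hee]
    nlinarith [hδ0, hδs, p2, p3, p4]
  have hθm_ge : 1 - ε' / 2 ≤ θm := by
    rw [hθmdef, le_div_iff₀ h1δ3', hee]
    nlinarith [hδ0, hδs, p2, p3, p4]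
  have hθp0 : 0 ≤ θp := div_nonneg (by linarith) h1δ3.le
  have hθm0 : 0 ≤ θm := div_nonneg (by linarith) h1δ3'.le
  clear_value θp θm
  set C0 := ∑ k ∈ Finset.range M, ψ (k + 1) ^ 2 / lam (k + 1) ^ 3 with hC0def
  have hC00 : 0 ≤ C0 :=
    Finset.sum_nonneg fun k _ => div_nonneg (sq_nonneg _) (pow_nonneg (hlam _).le 3)
  set Q := (M : ℝ) * (B / A ^ 3) with hQdef
  have hQ0 : 0 ≤ Q := by rw [hQdef]; positivity
  clear_value C0 Q
  have hrat := ratio_tendsto A B D hA hB hD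
  have e1 : ∀ᶠ l : ℝ in atTop,
      |(B / A ^ 3 * ∑' k : ℕ, 1 / (1 + D / (A * l) * ((k : ℝ) + 1) ^ 2)) /
        (B / A ^ ((5 : ℝ) / 2) * (π / 2) * Real.sqrt (l / D)) - 1| < δ := by
    filter_upwards [Metric.tendsto_nhds.mp hrat δ hδ0] with l hl
    rwa [Real.dist_eq] at hl
  have e2 : ∀ᶠ l : ℝ in atTop,
      |(B / A ^ ((5 : ℝ) / 2) * (π / 2) * Real.sqrt (l / D))⁻¹| < δ / (Q + C0 + 1) := by
    filter_upwards [Metric.tendsto_nhds.mp hKinv (δ / (Q + C0 + 1))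
      (div_pos hδ0 (by linarith))] with l hl
    rwa [Real.dist_eq, sub_zero] at hl
  filter_upwards [e1, e2, eventually_ge_atTop (1:ℝ)] with l h1l h2l h3l
  have hl0 : (0:ℝ) < l := by linarith
  have hc : 0 < D / (A * l) := div_pos hD (by positivity)
  set K := B / A ^ ((5 : ℝ) / 2) * (π / 2) * Real.sqrt (l / D) with hKdef
  have hK0 : 0 < K := by
    rw [hKdef]
    exact mul_pos (mul_pos (div_pos hB (Real.rpow_pos_of_pos hA _)) (by positivity))
      (Real.sqrt_pos.2 (div_pos hl0 hD))
  clear_value K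
  set t : ℕ → ℝ := fun k => B / A ^ 3 * (1 / (1 + D / (A * l) * ((k : ℝ) + 1) ^ 2)) with htdef
  set a : ℕ → ℝ := fun k => ψ (k + 1) ^ 2 / (lam (k + 1) ^ 2 * (lam (k + 1) + D / l))
    with hadef
  have ht0 : ∀ k, 0 ≤ t k := fun k => by
    rw [htdef]; positivity
  have hden0 : ∀ k : ℕ, 0 < lam (k + 1) ^ 2 * (lam (k + 1) + D / l) := fun k =>
    mul_pos (pow_pos (hlam _) 2) (by have := hlam (k + 1); have := div_pos hD hl0; linarith)
  have ha0 : ∀ k, 0 ≤ a k := fun k => by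
    rw [hadef]
    exact div_nonneg (sq_nonneg _) (hden0 k).le
  clear_value t a
  have key : ∀ k : ℕ, M ≤ k + 1 → θm * t k ≤ a k ∧ a k ≤ θp * t k := by
    intro k hk
    have hn1 : N₁ ≤ k + 1 := le_trans hM1 hk
    have hn2 : N₂ ≤ k + 1 := le_trans hM2 hk
    have hψk : |ψ (k + 1) ^ 2 / (B * ((k + 1 : ℕ) : ℝ) ^ (-6 : ℝ)) - 1| < δ := by
      have := hN₁ (k + 1) hn1
      rwa [Real.dist_eq] at this
    have hlk : |lam (k + 1) / (A * ((k + 1 : ℕ) : ℝ) ^ (-2 : ℝ)) - 1| < δ := by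
      have := hN₂ (k + 1) hn2
      rwa [Real.dist_eq] at this
    have hb := term_bounds (n := k + 1) hA hB hD hl0 hδ0 hδ1 (Nat.le_add_left 1 k)
      (hlam (k + 1)) hψk hlk
    rw [hadef, htdef, hθmdef, hθpdef]
    push_cast at hb
    exact hb
  -- summability
  have hsumt : Summable t := by
    rw [htdef]
    exact (summable_core hc).mul_left _
  have hsuma : Summable a := by
    rw [← summable_nat_add_iff M]
    apply Summable.of_nonneg_of_le (fun k => ha0 _) (fun k => (key (k + M) (by omega)).2)
    exact ((summable_nat_add_iff M).2 hsumt).mul_left θp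
  -- tsum over PNat equals tsum over ℕ shifted
  have hconv : (∑' n : ℕ+, ψ (n : ℕ) ^ 2 / (lam (n : ℕ) ^ 2 * (lam (n : ℕ) + D / l)))
      = ∑' k : ℕ, a k := by
    rw [← Equiv.tsum_eq Equiv.pnatEquivNat.symm
      (fun n : ℕ+ => ψ (n : ℕ) ^ 2 / (lam (n : ℕ) ^ 2 * (lam (n : ℕ) + D / l)))]
    apply tsum_congr
    intro k
    rw [hadef]
    simp [Equiv.pnatEquivNat, Nat.succPNat]
  set S := ∑' k : ℕ, a k with hSdef
  set T := ∑' k : ℕ, t k with hTdef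
  clear_value S T
  have hsplit_a := Summable.sum_add_tsum_nat_add M hsuma
  have hsplit_t := Summable.sum_add_tsum_nat_add M hsumt
  -- head bounds
  have hhead_a_ub : ∑ k ∈ Finset.range M, a k ≤ C0 := by
    rw [hC0def]
    apply Finset.sum_le_sum
    intro k _
    rw [hadef]
    apply div_le_div₀ (sq_nonneg _) (le_refl _) (pow_pos (hlam _) 3)
    have h1 : 0 < lam (k + 1) := hlam _
    have h2 : 0 < D / l := div_pos hD hl0
    have he : lam (k + 1) ^ 2 * (lam (k + 1) + D / l)
        = lam (k + 1) ^ 3 + lam (k + 1) ^ 2 * (D / l) := by ring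
    have h3 : 0 ≤ lam (k + 1) ^ 2 * (D / l) := mul_nonneg (sq_nonneg _) h2.le
    linarith
  have hhead_a_0 : 0 ≤ ∑ k ∈ Finset.range M, a k := Finset.sum_nonneg fun k _ => ha0 k
  have hhead_t_0 : 0 ≤ ∑ k ∈ Finset.range M, t k := Finset.sum_nonneg fun k _ => ht0 k
  have hhead_t_ub : ∑ k ∈ Finset.range M, t k ≤ Q := by
    rw [hQdef]
    calc ∑ k ∈ Finset.range M, t k ≤ ∑ _k ∈ Finset.range M, B / A ^ 3 := by
          apply Finset.sum_le_sum
          intro k _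
          rw [htdef]
          have hx : (0:ℝ) ≤ D / (A * l) * ((k : ℝ) + 1) ^ 2 := by positivity
          have : 1 / (1 + D / (A * l) * ((k : ℝ) + 1) ^ 2) ≤ 1 :=
            div_le_one_of_le₀ (by linarith) (by linarith)
          calc B / A ^ 3 * (1 / (1 + D / (A * l) * ((k : ℝ) + 1) ^ 2)) ≤ B / A ^ 3 * 1 :=
                mul_le_mul_of_nonneg_left this (by positivity)
            _ = B / A ^ 3 := mul_one _
      _ = (M : ℝ) * (B / A ^ 3) := by
          rw [Finset.sum_const, Finset.card_range, nsmul_eq_mul]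
  -- tail bounds
  have hsum_ta : Summable fun k => a (k + M) := (summable_nat_add_iff M).2 hsuma
  have hsum_tt : Summable fun k => t (k + M) := (summable_nat_add_iff M).2 hsumt
  have htail_ub : (∑' k : ℕ, a (k + M)) ≤ θp * ∑' k : ℕ, t (k + M) := by
    rw [← tsum_mul_left]
    exact Summable.tsum_le_tsum (fun k => (key (k + M) (by omega)).2) hsum_ta (hsum_tt.mul_left θp)
  have htail_lb : θm * (∑' k : ℕ, t (k + M)) ≤ ∑' k : ℕ, a (k + M) := by
    rw [← tsum_mul_left]
    exact Summable.tsum_le_tsum (fun k => (key (k + M) (by omega)).1) (hsum_tt.mul_left θm) hsum_ta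
  have htail_t_le : (∑' k : ℕ, t (k + M)) ≤ T := by linarith [hsplit_t]
  have htail_t_ge : T - Q ≤ ∑' k : ℕ, t (k + M) := by linarith [hsplit_t]
  have htail_t_0 : 0 ≤ ∑' k : ℕ, t (k + M) := tsum_nonneg fun k => ht0 _
  -- global bounds on S
  have hS_ub : S ≤ C0 + θp * T := by
    have h1 : θp * (∑' k : ℕ, t (k + M)) ≤ θp * T := mul_le_mul_of_nonneg_left htail_t_le hθp0
    linarith [hsplit_a, htail_ub]
  have hS_lb : θm * (T - Q) ≤ S := by
    have h1 : θm * (T - Q) ≤ θm * (∑' k : ℕ, t (k + M)) :=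
      mul_le_mul_of_nonneg_left htail_t_ge hθm0
    linarith [hsplit_a, htail_lb]
  -- ratio facts
  have hTK : |T / K - 1| < δ := by
    rw [hTdef, htdef, tsum_mul_left]
    exact h1l
  have hTK1 : 1 - δ ≤ T / K := by
    have := (abs_lt.mp hTK).1; linarith
  have hTK2 : T / K ≤ 1 + δ := by
    have := (abs_lt.mp hTK).2; linarith
  have hKlb : (Q + C0 + 1) / δ < K := by
    have h2l' : K⁻¹ < δ / (Q + C0 + 1) := lt_of_abs_lt h2l
    have hKinv0 : 0 < K⁻¹ := inv_pos.2 hK0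
    have := (inv_strictAnti₀ hKinv0 h2l')
    rwa [inv_inv, inv_div] at this
  have hQK : Q / K ≤ δ := by
    rw [div_le_iff₀ hK0]
    have h := mul_lt_mul_of_pos_left hKlb hδ0
    have he : δ * ((Q + C0 + 1) / δ) = Q + C0 + 1 := by field_simp
    rw [he] at h
    linarith [hC00]
  have hC0K : C0 / K ≤ δ := by
    rw [div_le_iff₀ hK0]
    have h := mul_lt_mul_of_pos_left hKlb hδ0
    have he : δ * ((Q + C0 + 1) / δ) = Q + C0 + 1 := by field_simp
    rw [he] at h
    linarith [hQ0]
  have hQK0 : 0 ≤ Q / K := div_nonneg hQ0 hK0.le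
  have hC0K0 : 0 ≤ C0 / K := div_nonneg hC00 hK0.le
  -- divide bounds by K
  have hSK_ub : S / K ≤ C0 / K + θp * (T / K) := by
    calc S / K ≤ (C0 + θp * T) / K := by
          apply div_le_div_of_nonneg_right hS_ub hK0.le
      _ = C0 / K + θp * (T / K) := by ring
  have hSK_lb : θm * (T / K) - θm * (Q / K) ≤ S / K := by
    calc θm * (T / K) - θm * (Q / K) = θm * (T - Q) / K := by ring
      _ ≤ S / K := div_le_div_of_nonneg_right hS_lb hK0.le
  -- combine
  have hub2 : θp * (T / K) ≤ (1 + ε' / 2) * (1 + δ) :=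
    mul_le_mul hθp_le hTK2 (by linarith) (by linarith)
  have hlb2 : (1 - ε' / 2) * (1 - 2 * δ) ≤ θm * (T / K - Q / K) :=
    mul_le_mul hθm_ge (by linarith) (by linarith) hθm0
  rw [hconv, abs_le]
  have hexp : θm * (T / K - Q / K) = θm * (T / K) - θm * (Q / K) := by ring
  have hmul0 : 0 ≤ ε' * δ := mul_nonneg hε'0.le hδ0.le
  have hmul1 : ε' * δ ≤ δ := by
    have := mul_le_mul_of_nonneg_right hε'1 hδ0.le
    linarith
  have hex1 : (1 - ε' / 2) * (1 - 2 * δ) = 1 - ε' / 2 - 2 * δ + ε' * δ := by ring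
  have hex2 : (1 + ε' / 2) * (1 + δ) = 1 + δ + ε' / 2 + ε' * δ / 2 := by ring
  constructor
  · linarith [hSK_lb, hlb2, hδdef]
  · linarith [hSK_ub, hub2, hC0K]
end
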